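/- arXiv:2310.02252 — 5 statements merged into one kernel-verified Lean document; each statement's English description precedes it below -/
import Mathlib

section
/- Let n ≥ 1 and let x_1, …, x_n be pairwise distinct elements of a field. Then the sum over i of x_i^{n-1} divided by the product over j ≠ i of (x_i - x_j) equals 1. -/
open Polynomial Lagrange Finset

/-- Interpolation identity, case `k = n - 1`: for pairwise distinct
`x_1, …, x_n` in a field, `∑ i, x i ^ (n-1) / ∏_{j ≠ i} (x i - x j) = 1`. -/
theorem interpolation_identity_top {F : Type*} [Field F] (n : ℕ) (hn : 1 ≤ n)
    (x : Fin n → F) (hx : Function.Injective x) :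
    ∑ i : Fin n, x i ^ (n - 1) / ∏ j ∈ Finset.univ.erase i, (x i - x j) = 1 := by
  have hvs : Set.InjOn x (Finset.univ : Finset (Fin n)) := hx.injOn
  set r : Fin n → F := fun i => x i ^ (n - 1) with hr
  have hP : interpolate Finset.univ x r = X ^ (n - 1) := by
    refine eq_of_degrees_lt_of_eval_index_eq _ hvs (degree_interpolate_lt _ hvs) ?_ ?_
    · rw [degree_X_pow, card_univ, Fintype.card_fin]
      exact_mod_cast Nat.sub_lt hn one_pos
    · intro i _
      rw [eval_interpolate_at_node r hvs (mem_univ i), eval_pow, eval_X]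
  have hcoeff := congrArg (fun p => Polynomial.coeff p (n - 1)) hP
  simp only [interpolate_apply, finset_sum_coeff, coeff_X_pow, if_pos rfl, if_true] at hcoeff
  rw [← hcoeff]
  refine Finset.sum_congr rfl fun i _ => ?_
  rw [basis_eq_prod_sub_inv_mul_nodal_div (mem_univ i), ← nodal_erase_eq_nodal_div (mem_univ i),
    ← mul_assoc, ← C_mul, coeff_C_mul]
  have hdeg : (nodal ((univ : Finset (Fin n)).erase i) x).natDegree = n - 1 := by
    rw [natDegree_nodal, card_erase_of_mem (mem_univ i), card_univ, Fintype.card_fin]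
  have hmon : (nodal ((univ : Finset (Fin n)).erase i) x).coeff (n - 1) = 1 := by
    rw [← hdeg]; exact nodal_monic.coeff_natDegree
  rw [hmon, mul_one, div_eq_mul_inv, mul_comm (r i), nodalWeight, ← prod_inv_distrib, mul_comm]
end

section
/- Let n ≥ 1, let x_1, …, x_n be pairwise distinct elements of a field, and let k ≥ 0. Then ∑_{i=1}^n x_i^k / ∏_{j≠i}(x_i - x_j) equals the complete homogeneous symmetric polynomial h_{k-n+1}(x_1, …, x_n), where h_r = 0 for r < 0 and h_0 = 1. -/
/-- The complete homogeneous symmetric polynomial `h_r(x_1, …, x_n)`: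
the sum over all multisets of size `r` from `Fin n` of the corresponding monomial. -/
noncomputable def completeHomogeneous {F : Type*} [CommRing F] (n : ℕ) (x : Fin n → F)
    (r : ℕ) : F :=
  ∑ m ∈ (Finset.univ : Finset (Fin n)).sym r, ((m : Multiset (Fin n)).map x).prod

section Aux


open Finset

variable {F : Type*} [Field F] {ι : Type*} [DecidableEq ι]

/-- complete homogeneous over a finset, via `piAntidiag`. -/
noncomputable def Paux (x : ι → F) (s : Finset ι) (r : ℕ) : F :=
  ∑ f ∈ s.piAntidiag r, ∏ i ∈ s, x i ^ f i

lemma Paux_empty (x : ι → F) (r : ℕ) :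
    Paux x (∅ : Finset ι) r = if r = 0 then 1 else 0 := by
  rcases eq_or_ne r 0 with rfl | hr <;> simp [Paux, piAntidiag_empty, *]

lemma Paux_zero (x : ι → F) (s : Finset ι) : Paux x s 0 = 1 := by
  simp [Paux]

lemma Paux_insert {a : ι} {s : Finset ι} (ha : a ∉ s) (x : ι → F) (r : ℕ) :
    Paux x (insert a s) r = ∑ p ∈ Finset.HasAntidiagonal.antidiagonal r, x a ^ p.1 * Paux x s p.2 := by
  rw [Paux, ← cons_eq_insert _ _ ha, piAntidiag_cons ha, sum_disjiUnion]
  refine Finset.sum_congr rfl fun p _ => ?_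
  rw [Finset.sum_map, Paux, Finset.mul_sum]
  refine Finset.sum_congr rfl fun g hg => ?_
  have hga : g a = 0 := by
    by_contra h
    exact ha ((mem_piAntidiag.1 hg).2 a h)
  simp only [addRightEmbedding_apply]
  rw [prod_cons]
  have h1 : (fun i => x i ^ (g i + if i = a then p.1 else 0)) a = x a ^ p.1 := by
    simp [hga]
  rw [show (g + fun t => if t = a then p.1 else 0) a = p.1 by simp [hga]]
  congr 1
  refine Finset.prod_congr rfl fun i hi => ?_
  have : i ≠ a := fun h => ha (h ▸ hi)
  simp [this]

lemma Paux_two_term {a : ι} {s : Finset ι} (ha : a ∉ s) (x : ι → F) (r : ℕ) :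
    Paux x (insert a s) (r + 1) =
      x a * Paux x (insert a s) r + Paux x s (r + 1) := by
  rw [Paux_insert ha, Paux_insert ha, Nat.antidiagonal_succ, sum_cons, Finset.sum_map,
    Finset.mul_sum]
  simp only [Function.Embedding.coe_prodMap, Function.Embedding.coeFn_mk,
    Function.Embedding.refl_apply, Prod.map_fst, Prod.map_snd, pow_zero, one_mul]
  rw [add_comm]
  congr 1
  refine Finset.sum_congr rfl fun p _ => ?_
  rw [pow_succ]
  ring

lemma Paux_singleton (x : ι → F) (a : ι) (k : ℕ) : Paux x {a} k = x a ^ k := by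
  induction k with
  | zero => simp [Paux_zero]
  | succ k ih =>
    have : ({a} : Finset ι) = insert a ∅ := by simp
    rw [this, Paux_two_term (notMem_empty a) x k, ← this, ih,
      Paux_empty, if_neg (Nat.succ_ne_zero k), add_zero, pow_succ]
    ring

lemma Paux_swap {a b : ι} {s : Finset ι} (ha : a ∉ s) (hb : b ∉ s) (hab : a ≠ b)
    (x : ι → F) (r : ℕ) :
    Paux x (insert a s) (r + 1) - Paux x (insert b s) (r + 1) =
      (x a - x b) * Paux x (insert a (insert b s)) r := by
  have hb' : b ∉ insert a s := by simp [hab.symm, hb]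
  have ha' : a ∉ insert b s := by simp [hab, ha]
  have hcomm : insert b (insert a s) = insert a (insert b s) := Finset.insert_comm _ _ _
  have e1 : Paux x (insert a (insert b s)) (r + 1) =
      x a * Paux x (insert a (insert b s)) r + Paux x (insert b s) (r + 1) :=
    Paux_two_term ha' x r
  have e2 : Paux x (insert a (insert b s)) (r + 1) =
      x b * Paux x (insert a (insert b s)) r + Paux x (insert a s) (r + 1) := by
    rw [← hcomm]
    exact Paux_two_term hb' x r
  linear_combination e1 - e2

lemma lhs_split {s : Finset ι} {x : ι → F} (hinj : Set.InjOn x s)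
    {a b : ι} (ha : a ∈ s) (hb : b ∈ s) (hab : a ≠ b) (k : ℕ) :
    (x a - x b) * ∑ i ∈ s, x i ^ k / ∏ j ∈ s.erase i, (x i - x j) =
      (∑ i ∈ s.erase b, x i ^ k / ∏ j ∈ (s.erase b).erase i, (x i - x j)) -
      (∑ i ∈ s.erase a, x i ^ k / ∏ j ∈ (s.erase a).erase i, (x i - x j)) := by
  have key : ∀ c ∈ s, ∀ i ∈ s,
      (x i - x c) * (x i ^ k / ∏ j ∈ s.erase i, (x i - x j)) =
        if i = c then 0 else x i ^ k / ∏ j ∈ (s.erase c).erase i, (x i - x j) := by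
    intro c hc i hi
    rcases eq_or_ne i c with rfl | hic
    · simp
    · rw [if_neg hic]
      have hc' : c ∈ s.erase i := Finset.mem_erase.2 ⟨fun h => hic h.symm, hc⟩
      have hprod : ∏ j ∈ s.erase i, (x i - x j) =
          (x i - x c) * ∏ j ∈ (s.erase c).erase i, (x i - x j) := by
        rw [Finset.erase_right_comm (a := c) (b := i)]
        exact (Finset.mul_prod_erase _ _ hc').symm
      have hne : x i - x c ≠ 0 :=
        sub_ne_zero.2 fun h => hic (hinj hi hc h)
      rw [hprod, mul_div_assoc', mul_div_mul_left _ _ hne]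
  have expand : ∀ i ∈ s,
      (x a - x b) * (x i ^ k / ∏ j ∈ s.erase i, (x i - x j)) =
        (if i = b then 0 else x i ^ k / ∏ j ∈ (s.erase b).erase i, (x i - x j)) -
        (if i = a then 0 else x i ^ k / ∏ j ∈ (s.erase a).erase i, (x i - x j)) := by
    intro i hi
    rw [← key b hb i hi, ← key a ha i hi]
    ring
  rw [Finset.mul_sum, Finset.sum_congr rfl expand, Finset.sum_sub_distrib]
  have gen : ∀ (g : ι → F) (c : ι), c ∈ s →
      (∑ i ∈ s, if i = c then 0 else g i) = ∑ i ∈ s.erase c, g i := by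
    intro g c hc
    rw [← Finset.add_sum_erase s _ hc, if_pos rfl, zero_add]
    exact Finset.sum_congr rfl fun i hi => if_neg (Finset.mem_erase.1 hi).1
  rw [gen _ b hb, gen _ a ha]

lemma main_aux (x : ι → F) :
    ∀ s : Finset ι, Set.InjOn x s → s.Nonempty → ∀ k : ℕ,
      ∑ i ∈ s, x i ^ k / ∏ j ∈ s.erase i, (x i - x j) =
        if s.card ≤ k + 1 then Paux x s (k + 1 - s.card) else 0 := by
  intro s
  induction s using Finset.strongInduction with
  | _ s IH =>
    intro hinj hne k
    obtain ⟨a, ha⟩ := hne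
    by_cases hsing : s = {a}
    · subst hsing
      rw [Finset.sum_singleton, Finset.erase_singleton, Finset.prod_empty, div_one,
        Finset.card_singleton, if_pos (Nat.le_add_left 1 k), Nat.add_sub_cancel,
        Paux_singleton]
    · obtain ⟨b, hb, hba⟩ : ∃ b ∈ s, b ≠ a := by
        by_contra h
        push_neg at h
        exact hsing (Finset.eq_singleton_iff_unique_mem.2 ⟨ha, h⟩)
      have hab : a ≠ b := hba.symm
      have hxab : x a - x b ≠ 0 := sub_ne_zero.2 fun h => hab (hinj ha hb h)
      set s' : Finset ι := (s.erase a).erase b with hs'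
      have hb' : b ∈ s.erase a := Finset.mem_erase.2 ⟨hba, hb⟩
      have ha' : a ∈ s.erase b := Finset.mem_erase.2 ⟨hab, ha⟩
      have eqB : insert b s' = s.erase a := Finset.insert_erase hb'
      have eqA : insert a s' = s.erase b := by
        rw [hs', Finset.erase_right_comm]
        exact Finset.insert_erase ha'
      have eqS : insert a (insert b s') = s := by rw [eqB, Finset.insert_erase ha]
      have has' : a ∉ s' := fun h =>
        Finset.notMem_erase a s (Finset.mem_of_mem_erase (hs' ▸ h))
      have hbs' : b ∉ s' := Finset.notMem_erase b _
      -- apply IH to both erasures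
      have hsubA : (s.erase a : Set ι) ⊆ s := Finset.coe_subset.2 (Finset.erase_subset _ _)
      have hsubB : (s.erase b : Set ι) ⊆ s := Finset.coe_subset.2 (Finset.erase_subset _ _)
      have IHa := IH (s.erase a) (Finset.erase_ssubset ha) (hinj.mono hsubA) ⟨b, hb'⟩ k
      have IHb := IH (s.erase b) (Finset.erase_ssubset hb) (hinj.mono hsubB) ⟨a, ha'⟩ k
      have cardA : (s.erase a).card = s.card - 1 := Finset.card_erase_of_mem ha
      have cardB : (s.erase b).card = s.card - 1 := Finset.card_erase_of_mem hb
      have hn2 : 2 ≤ s.card := Finset.one_lt_card.2 ⟨a, ha, b, hb, hab⟩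
      have key := lhs_split hinj ha hb hab k
      have hT : ∑ i ∈ s, x i ^ k / ∏ j ∈ s.erase i, (x i - x j) =
          ((∑ i ∈ s.erase b, x i ^ k / ∏ j ∈ (s.erase b).erase i, (x i - x j)) -
           (∑ i ∈ s.erase a, x i ^ k / ∏ j ∈ (s.erase a).erase i, (x i - x j))) /
            (x a - x b) := by
        rw [eq_div_iff hxab]
        linear_combination key
      rw [hT, IHa, IHb, cardA, cardB]
      by_cases h1 : s.card ≤ k + 1
      · have h2 : s.card - 1 ≤ k + 1 := by omega
        have h3 : k + 1 - (s.card - 1) = (k + 1 - s.card) + 1 := by omega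
        simp only [if_pos h1, if_pos h2, h3]
        have swap := Paux_swap has' hbs' hab x (k + 1 - s.card)
        rw [eqA, eqB, Finset.insert_erase ha] at swap
        rw [swap, mul_div_cancel_left₀ _ hxab]
      · rw [if_neg h1]
        by_cases h2 : s.card - 1 ≤ k + 1
        · have h3 : k + 1 - (s.card - 1) = 0 := by omega
          simp only [if_pos h2, h3, Paux_zero]
          rw [sub_self, zero_div]
        · simp only [if_neg h2]
          rw [sub_self, zero_div]

lemma complete_eq (n : ℕ) (x : Fin n → F) (r : ℕ) :
    completeHomogeneous n x r = Paux x Finset.univ r := by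
  rw [completeHomogeneous, Paux, ← map_sym_eq_piAntidiag, Finset.sum_map]
  refine Finset.sum_congr rfl fun m _ => ?_
  rw [Finset.prod_multiset_map_count]
  refine (Finset.prod_subset (f := fun i => x i ^ Multiset.count i (m : Multiset (Fin n)))
    (Finset.subset_univ ((m : Multiset (Fin n)).toFinset)) (fun i _ hi => ?_))
  rw [Multiset.count_eq_zero_of_notMem (by simpa using hi), pow_zero]

end Aux

/-- Interpolation identity (Waring/Louck/Chen): for pairwise distinct `x_1, …, x_n` in a
field and any `k ≥ 0`, `∑ i, x i ^ k / ∏_{j ≠ i} (x i - x j) = h_{k - n + 1}(x)`,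
with the convention that `h_r = 0` for `r < 0` (and `h_0 = 1`). -/
theorem interpolation_identity {F : Type*} [Field F] (n : ℕ) (hn : 1 ≤ n)
    (x : Fin n → F) (hx : Function.Injective x) (k : ℕ) :
    ∑ i : Fin n, x i ^ k / ∏ j ∈ Finset.univ.erase i, (x i - x j) =
      (if n ≤ k + 1 then completeHomogeneous n x (k + 1 - n) else 0) := by
  have hne : (Finset.univ : Finset (Fin n)).Nonempty := ⟨⟨0, hn⟩, Finset.mem_univ _⟩
  have h := main_aux x Finset.univ hx.injOn hne k
  rw [Finset.card_univ, Fintype.card_fin] at h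
  rw [h, complete_eq]
end

section
/- Let a, c be real numbers with b := a + c, and suppose |a|, |b|, |c| ≥ 1 with none of the square roots being imaginary (i.e. 1 - 1/a² ≥ 0 etc.). Define the 6×6 matrices S (block diagonal with 2×2 reflection blocks for parameters a, b, c) and T (the matrix obtained by permuting basis vectors 2↔3 and 4↔6 and using parameters c, b, a as in Young's orthogonal form). Then (S T)³ = I. -/
open Matrix

/-- The 2×2 reflection block of Young's orthogonal form. -/
noncomputable def reflEntryInv (x : ℝ) : ℝ := 1 / x

/-- The off-diagonal entry of the reflection block. -/
noncomputable def reflEntrySqrt (x : ℝ) : ℝ := Real.sqrt (1 - 1 / x ^ 2)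

lemma cons_val_five' {α : Type*} {m : ℕ} (x : α) (u : Fin m.succ.succ.succ.succ.succ → α) :
    Matrix.vecCons x u 5 = Matrix.vecHead (Matrix.vecTail (Matrix.vecTail (Matrix.vecTail (Matrix.vecTail u)))) :=
  rfl

set_option maxHeartbeats 2000000 in
theorem braid_aux (a b g p q r : ℝ)
    (hp : p^2 = 1 - a^2) (hq : q^2 = 1 - b^2) (hr : r^2 = 1 - g^2)
    (hrel : a*g = a*b + b*g) :
    (!![a,p,0,0,0,0;p,-a,0,0,0,0;(0:ℝ),0,b,q,0,0;0,0,q,-b,0,0;0,0,0,0,g,r;0,0,0,0,r,-g] *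
     !![g,0,r,0,0,0;0,b,0,0,q,0;r,0,-g,0,0,0;0,0,0,a,0,p;0,q,0,0,-b,0;0,0,0,p,0,-a]) ^ 3 = 1 := by
  have hone : (1 : Matrix (Fin 6) (Fin 6) ℝ) =
      !![1,0,0,0,0,0;0,1,0,0,0,0;(0:ℝ),0,1,0,0,0;0,0,0,1,0,0;0,0,0,0,1,0;0,0,0,0,0,1] := by
    ext i j
    fin_cases i <;> fin_cases j <;> simp [Matrix.one_apply, cons_val_five', Matrix.vecHead, Matrix.vecTail]
  have hU : (!![a,p,0,0,0,0;p,-a,0,0,0,0;(0:ℝ),0,b,q,0,0;0,0,q,-b,0,0;0,0,0,0,g,r;0,0,0,0,r,-g] *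
     !![g,0,r,0,0,0;0,b,0,0,q,0;r,0,-g,0,0,0;0,0,0,a,0,p;0,q,0,0,-b,0;0,0,0,p,0,-a]) = !![a*g, b*p, a*r, 0, p*q, 0;
       g*p, -a*b, p*r, 0, -a*q, 0;
       b*r, 0, -b*g, a*q, 0, p*q;
       q*r, 0, -g*q, -a*b, 0, -b*p;
       0, g*q, 0, p*r, -b*g, -a*r;
       0, q*r, 0, -g*p, -b*r, a*g] := by
    ext i j
    fin_cases i <;> fin_cases j <;>
      simp [Matrix.mul_apply, Fin.sum_univ_succ, cons_val_five', Matrix.vecHead, Matrix.vecTail] <;> ring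
  have hV : (!![a*g, b*p, a*r, 0, p*q, 0;
       g*p, -a*b, p*r, 0, -a*q, 0;
       b*r, 0, -b*g, a*q, 0, p*q;
       q*r, 0, -g*q, -a*b, 0, -b*p;
       0, g*q, 0, p*r, -b*g, -a*r;
       0, q*r, 0, -g*p, -b*r, a*g]) * !![a*g, b*p, a*r, 0, p*q, 0;
       g*p, -a*b, p*r, 0, -a*q, 0;
       b*r, 0, -b*g, a*q, 0, p*q;
       q*r, 0, -g*q, -a*b, 0, -b*p;
       0, g*q, 0, p*r, -b*g, -a*r;
       0, q*r, 0, -g*p, -b*r, a*g] = !![b*g + a*b - a*b*g^2 + a^2*g^2 - a^2*b*g, g*p - b^2*g*p + a*b*g*p - a*b^2*p, b*r - a*b*g*r + a^2*g*r - a^2*b*r, q*r, -b*g*p*q + a*g*p*q - a*b*p*q, 0;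
       b*p - b*g^2*p + a*g^2*p - a*b*g*p, b*g - a*g + a*b^2*g - a^2*b*g + a^2*b^2, -b*g*p*r + a*g*p*r - a*b*p*r, 0, g*q + a*b*g*q - a^2*g*q + a^2*b*q, q*r;
       -b^2*g*r + a*r + a*b*g*r - a*b^2*r, p*r, b^2*g^2 - a*g + a*b - a*b*g^2 + a*b^2*g, -g*q - a*b*g*q + a^2*g*q - a^2*b*q, 0, -b*g*p*q + a*g*p*q - a*b*p*q;
       -b*g*q*r + a*g*q*r - a*b*q*r, 0, b*g^2*q + a*q - a*g^2*q + a*b*g*q, b*g - a*g + a*b^2*g - a^2*b*g + a^2*b^2, p*r, -g*p + b^2*g*p - a*b*g*p + a*b^2*p;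
       p*q, -b*g^2*q - a*q + a*g^2*q - a*b*g*q, 0, -b*g*p*r + a*g*p*r - a*b*p*r, b^2*g^2 - a*g + a*b - a*b*g^2 + a*b^2*g, -b*r + a*b*g*r - a^2*g*r + a^2*b*r;
       0, -b*g*q*r + a*g*q*r - a*b*q*r, p*q, -b*p + b*g^2*p - a*g^2*p + a*b*g*p, b^2*g*r - a*r - a*b*g*r + a*b^2*r, b*g + a*b - a*b*g^2 + a^2*g^2 - a^2*b*g] := by
    ext i j
    fin_cases i <;> fin_cases j <;>
      simp only [Fin.isValue, Matrix.mul_apply, Matrix.of_apply, Matrix.cons_val', Matrix.empty_val',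
      Matrix.cons_val_fin_one, Matrix.cons_val_three, Matrix.vecHead, Matrix.vecTail,
      Nat.succ_eq_add_one, Nat.reduceAdd, Function.comp_apply, Fin.succ_zero_eq_one,
      Fin.succ_one_eq_two, Matrix.cons_val_two, Matrix.cons_val_one, Matrix.cons_val_zero,
      cons_val_five', Matrix.cons_val_succ, Fin.sum_univ_succ, Matrix.cons_val_four,
      Finset.univ_unique, Fin.default_eq_zero, Fin.zero_eta, Fin.mk_one, Fin.reduceFinMk, Finset.sum_singleton]
    · linear_combination (b*g) * hp + (a*b) * hr
    · linear_combination (g*p) * hq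
    · linear_combination (b*r) * hp
    · linear_combination (q*r) * hp
    · ring
    · ring
    · linear_combination (b*p) * hr
    · linear_combination (b*g) * hp + (-a*g) * hq
    · ring
    · ring
    · linear_combination (g*q) * hp
    · linear_combination (q*r) * hp
    · linear_combination (a*r) * hq
    · linear_combination (p*r) * hq
    · linear_combination (-a*g) * hq + (a*b) * hr
    · linear_combination (-g*q) * hp
    · ring
    · ring
    · ring
    · ring
    · linear_combination (a*q) * hr
    · linear_combination (b*g) * hp + (-a*g) * hq
    · linear_combination (p*r) * hq
    · linear_combination (-g*p) * hq
    · linear_combination (p*q) * hr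
    · linear_combination (-a*q) * hr
    · ring
    · ring
    · linear_combination (-a*g) * hq + (a*b) * hr
    · linear_combination (-b*r) * hp
    · ring
    · ring
    · linear_combination (p*q) * hr
    · linear_combination (-b*p) * hr
    · linear_combination (-a*r) * hq
    · linear_combination (b*g) * hp + (a*b) * hr
  have hF : (!![b*g + a*b - a*b*g^2 + a^2*g^2 - a^2*b*g, g*p - b^2*g*p + a*b*g*p - a*b^2*p, b*r - a*b*g*r + a^2*g*r - a^2*b*r, q*r, -b*g*p*q + a*g*p*q - a*b*p*q, 0;
       b*p - b*g^2*p + a*g^2*p - a*b*g*p, b*g - a*g + a*b^2*g - a^2*b*g + a^2*b^2, -b*g*p*r + a*g*p*r - a*b*p*r, 0, g*q + a*b*g*q - a^2*g*q + a^2*b*q, q*r;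
       -b^2*g*r + a*r + a*b*g*r - a*b^2*r, p*r, b^2*g^2 - a*g + a*b - a*b*g^2 + a*b^2*g, -g*q - a*b*g*q + a^2*g*q - a^2*b*q, 0, -b*g*p*q + a*g*p*q - a*b*p*q;
       -b*g*q*r + a*g*q*r - a*b*q*r, 0, b*g^2*q + a*q - a*g^2*q + a*b*g*q, b*g - a*g + a*b^2*g - a^2*b*g + a^2*b^2, p*r, -g*p + b^2*g*p - a*b*g*p + a*b^2*p;
       p*q, -b*g^2*q - a*q + a*g^2*q - a*b*g*q, 0, -b*g*p*r + a*g*p*r - a*b*p*r, b^2*g^2 - a*g + a*b - a*b*g^2 + a*b^2*g, -b*r + a*b*g*r - a^2*g*r + a^2*b*r;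
       0, -b*g*q*r + a*g*q*r - a*b*q*r, p*q, -b*p + b*g^2*p - a*g^2*p + a*b*g*p, b^2*g*r - a*r - a*b*g*r + a*b^2*r, b*g + a*b - a*b*g^2 + a^2*g^2 - a^2*b*g]) * !![a*g, b*p, a*r, 0, p*q, 0;
       g*p, -a*b, p*r, 0, -a*q, 0;
       b*r, 0, -b*g, a*q, 0, p*q;
       q*r, 0, -g*q, -a*b, 0, -b*p;
       0, g*q, 0, p*r, -b*g, -a*r;
       0, q*r, 0, -g*p, -b*r, a*g] = 1 := by
    rw [hone]
    ext i j
    fin_cases i <;> fin_cases j <;>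
      simp only [Fin.isValue, Matrix.mul_apply, Matrix.of_apply, Matrix.cons_val', Matrix.empty_val',
      Matrix.cons_val_fin_one, Matrix.cons_val_three, Matrix.vecHead, Matrix.vecTail,
      Nat.succ_eq_add_one, Nat.reduceAdd, Function.comp_apply, Fin.succ_zero_eq_one,
      Fin.succ_one_eq_two, Matrix.cons_val_two, Matrix.cons_val_one, Matrix.cons_val_zero,
      cons_val_five', Matrix.cons_val_succ, Fin.sum_univ_succ, Matrix.cons_val_four,
      Finset.univ_unique, Fin.default_eq_zero, Fin.zero_eta, Fin.mk_one, Fin.reduceFinMk, Finset.sum_singleton]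
    · linear_combination (g^2 - b^2*g^2 + a*b*g^2 - a*b^2*g) * hp + (r^2) * hq + (1 - a*b^2*g + a^2*b*g - a^2*b^2) * hr + (b*g - a*g + a*b - a*b*g^2 + a^2*g^2 - a^2*b*g) * hrel
    · linear_combination (-b*g^2*p + a*g^2*p - a*b*g*p) * hq + (g*p - b*p - b^2*g*p + a*b*g*p - a*b^2*p) * hrel
    · linear_combination (g*r - b^2*g*r + a*b*g*r - a*b^2*r) * hp + (-g*r) * hq + (b*r - a*r - a*b*g*r + a^2*g*r - a^2*b*r) * hrel
    · linear_combination (-b*g*q*r + a*g*q*r - a*b*q*r) * hp + (q*r) * hrel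
    · linear_combination (-p*q - b*g*p*q + a*g*p*q - a*b*p*q) * hrel
    · ring
    · linear_combination (-b^2*g*p + a*b*g*p - a*b^2*p) * hr + (-g*p + b*p - b*g^2*p + a*g^2*p - a*b*g*p) * hrel
    · linear_combination (b^2 - b^2*g^2 + a*b*g^2 - a*b^2*g) * hp + (r^2 + g^2 + a*b*g^2 - a^2*g^2 + a^2*b*g) * hq + (1 - b^2) * hr + (b*g - a*g + a*b + a*b^2*g - a^2*b*g + a^2*b^2) * hrel
    · linear_combination (-p*r - b*g*p*r + a*g*p*r - a*b*p*r) * hrel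
    · ring
    · linear_combination (b*q - b*g^2*q + a*g^2*q - a*b*g*q) * hp + (-b*q) * hr + (g*q + a*q + a*b*g*q - a^2*g*q + a^2*b*q) * hrel
    · linear_combination (-b*g*q*r + a*g*q*r - a*b*q*r) * hp + (q*r) * hrel
    · linear_combination (g*r) * hp + (-g*r - a*b*g*r + a^2*g*r - a^2*b*r) * hq + (-b*r - b^2*g*r + a*r + a*b*g*r - a*b^2*r) * hrel
    · linear_combination (-b*g*p*r + a*g*p*r - a*b*p*r) * hq + (p*r) * hrel
    · linear_combination (r^2) * hp + (g^2 + a*b*g^2 - a^2*g^2 + a^2*b*g) * hq + (1 - a*b^2*g + a^2*b*g - a^2*b^2) * hr + (b*g + b^2*g^2 - a*g + a*b - a*b*g^2 + a*b^2*g) * hrel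
    · linear_combination (b*g^2*q - a*g^2*q + a*b*g*q) * hp + (-g*q - a*q - a*b*g*q + a^2*g*q - a^2*b*q) * hrel
    · ring
    · linear_combination (-p*q - b*g*p*q + a*g*p*q - a*b*p*q) * hrel
    · linear_combination (-q*r - b*g*q*r + a*g*q*r - a*b*q*r) * hrel
    · ring
    · linear_combination (-a*b*g*q + a^2*g*q - a^2*b*q) * hr + (g*q + b*g^2*q + a*q - a*g^2*q + a*b*g*q) * hrel
    · linear_combination (r^2 + g^2 - b^2*g^2 + a*b*g^2 - a*b^2*g) * hp + (a*b*g^2 + a^2 - a^2*g^2 + a^2*b*g) * hq + (1 - a^2) * hr + (b*g - a*g + a*b + a*b^2*g - a^2*b*g + a^2*b^2) * hrel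
    · linear_combination (-b*g*p*r + a*g*p*r - a*b*p*r) * hq + (p*r) * hrel
    · linear_combination (b*g^2*p + a*p - a*g^2*p + a*b*g*p) * hq + (-a*p) * hr + (-g*p + b*p + b^2*g*p - a*b*g*p + a*b^2*p) * hrel
    · linear_combination (-b*g*p*q + a*g*p*q - a*b*p*q) * hr + (p*q) * hrel
    · linear_combination (b*q) * hp + (-b*q + a*b*g*q - a^2*g*q + a^2*b*q) * hr + (-g*q - b*g^2*q - a*q + a*g^2*q - a*b*g*q) * hrel
    · ring
    · linear_combination (-p*r - b*g*p*r + a*g*p*r - a*b*p*r) * hrel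
    · linear_combination (q^2) * hp + (1 + a*b*g^2 - a^2*g^2 + a^2*b*g) * hq + (b^2 - a*b^2*g + a^2*b*g - a^2*b^2) * hr + (b*g + b^2*g^2 - a*g + a*b - a*b*g^2 + a*b^2*g) * hrel
    · linear_combination (b^2*g*r - a*b*g*r + a*b^2*r) * hp + (-b*r + a*r + a*b*g*r - a^2*g*r + a^2*b*r) * hrel
    · ring
    · linear_combination (-q*r - b*g*q*r + a*g*q*r - a*b*q*r) * hrel
    · linear_combination (-b*g*p*q + a*g*p*q - a*b*p*q) * hr + (p*q) * hrel
    · linear_combination (a*p) * hq + (b^2*g*p - a*p - a*b*g*p + a*b^2*p) * hr + (g*p - b*p + b*g^2*p - a*g^2*p + a*b*g*p) * hrel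
    · linear_combination (a*b*g*r - a^2*g*r + a^2*b*r) * hq + (b*r + b^2*g*r - a*r - a*b*g*r + a*b^2*r) * hrel
    · linear_combination (q^2 + b^2 - b^2*g^2 + a*b*g^2 - a*b^2*g) * hp + (1 - a^2) * hq + (-a*b^2*g + a^2 + a^2*b*g - a^2*b^2) * hr + (b*g - a*g + a*b - a*b*g^2 + a^2*g^2 - a^2*b*g) * hrel
  rw [pow_succ, pow_succ, pow_one, hU, hV, hF]

/-- Braid relation `(σ_i σ_{i+1})³ = 1` in Young's orthogonal form: with `b = a + c`
(the axial-distance relation) and `|a|, |b|, |c| ≥ 1`, the 6×6 matrices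
`S = diag(R(a), R(b), R(c))` and `T` (the permuted version with parameters `c, b, a`)
satisfy `(S T)³ = 1`. -/
theorem young_braid_relation (a c : ℝ) (b : ℝ) (hb : b = a + c)
    (ha : 1 ≤ |a|) (hbb : 1 ≤ |b|) (hc : 1 ≤ |c|) :
    let f := reflEntryInv
    let g := reflEntrySqrt
    let S : Matrix (Fin 6) (Fin 6) ℝ :=
      !![f a, g a, 0, 0, 0, 0;
         g a, -f a, 0, 0, 0, 0;
         0, 0, f b, g b, 0, 0;
         0, 0, g b, -f b, 0, 0;
         0, 0, 0, 0, f c, g c;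
         0, 0, 0, 0, g c, -f c]
    let T : Matrix (Fin 6) (Fin 6) ℝ :=
      !![f c, 0, g c, 0, 0, 0;
         0, f b, 0, 0, g b, 0;
         g c, 0, -f c, 0, 0, 0;
         0, 0, 0, f a, 0, g a;
         0, g b, 0, 0, -f b, 0;
         0, 0, 0, g a, 0, -f a]
    (S * T) ^ 3 = 1 := by
  intro f g S T
  have ha0 : a ≠ 0 := by intro h; rw [h] at ha; norm_num at ha
  have hb0 : b ≠ 0 := by intro h; rw [h] at hbb; norm_num at hbb
  have hc0 : c ≠ 0 := by intro h; rw [h] at hc; norm_num at hc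
  have key : ∀ x : ℝ, 1 ≤ |x| → (g x) ^ 2 = 1 - (f x) ^ 2 := by
    intro x hx
    have hx2 : (1:ℝ) ≤ x ^ 2 := by nlinarith [sq_abs x, abs_nonneg x]
    have hnn : (0:ℝ) ≤ 1 - 1 / x ^ 2 := by
      rw [sub_nonneg, div_le_one (by positivity)]
      exact hx2
    show Real.sqrt (1 - 1 / x ^ 2) ^ 2 = 1 - (1 / x) ^ 2
    rw [Real.sq_sqrt hnn, div_pow, one_pow]
  have hrel : f a * f c = f a * f b + f b * f c := by
    show 1 / a * (1 / c) = 1 / a * (1 / b) + 1 / b * (1 / c)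
    subst hb
    field_simp
    ring
  exact braid_aux (f a) (f b) (f c) (g a) (g b) (g c)
    (key a ha) (key b hbb) (key c hc) hrel
end

section
/- Let λ be a Young diagram with at most d rows, obtained by removing one cell x from a Young diagram μ ⊢ p with at most d rows. Then d + cont(x) = p · (d_λ / d_μ) · (m_μ / m_λ), where cont(x) = j - i is the content of cell x = (i,j), d_ν is the number of standard Young tableaux of shape ν, and m_ν is the number of semistandard Young tableaux of shape ν with entries in {1, …, d}. -/
/-- The number of standard Young tableaux of shape `μ`, encoded as the number of
saturated chains `⊥ = T 0 ⊆ T 1 ⊆ ⋯ ⊆ T |μ| = μ` in the Young lattice in which each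
step adds exactly one cell. -/
noncomputable def sytCount (μ : YoungDiagram) : ℕ :=
  Nat.card {T : Fin (μ.card + 1) → YoungDiagram //
    T 0 = ⊥ ∧ T (Fin.last μ.card) = μ ∧
    ∀ i : Fin μ.card, T i.castSucc ≤ T i.succ ∧
      (T i.succ).card = (T i.castSucc).card + 1}

/-- The number of semistandard Young tableaux of shape `μ` with entries in
`{0, 1, …, d-1}` (i.e. `d` allowed symbols). -/
noncomputable def ssytCount (μ : YoungDiagram) (d : ℕ) : ℕ :=
  Nat.card {T : SemistandardYoungTableau μ // ∀ i j : ℕ, (i, j) ∈ μ → T i j < d}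

/-- A cell `c` is addable to `μ` if it is not in `μ` and adding it yields a valid
Young diagram. -/
def IsAddableCell (μ : YoungDiagram) (c : ℕ × ℕ) : Prop :=
  c ∉ μ ∧ ∃ ν : YoungDiagram, ν.cells = insert c μ.cells

/-- A cell `c` is removable from `μ` if it is in `μ` and removing it yields a valid
Young diagram. -/
def IsRemovableCell (μ : YoungDiagram) (c : ℕ × ℕ) : Prop :=
  c ∈ μ ∧ ∃ ν : YoungDiagram, ν.cells = μ.cells.erase c

/-- The content `j - i` of a cell `(i, j)`, as a rational number. -/
def contQ (c : ℕ × ℕ) : ℚ := (c.2 : ℚ) - (c.1 : ℚ)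

namespace CID
open YoungDiagram Finset

/-! ### Finiteness of subdiagrams -/

instance finiteSub (μ : YoungDiagram) : Finite {ν : YoungDiagram | ν ≤ μ} := by
  apply Finite.of_injective
    (fun ν => (⟨ν.1.cells, Finset.mem_powerset.mpr (YoungDiagram.cells_subset_iff.mpr ν.2)⟩ :
      μ.cells.powerset))
  intro a b h
  ext1
  ext1
  simpa using congrArg Subtype.val h

noncomputable def subs (μ : YoungDiagram) : Finset YoungDiagram :=
  Set.Finite.toFinset (Set.toFinite {ν : YoungDiagram | ν ≤ μ})

@[simp] lemma mem_subs {μ ν : YoungDiagram} : ν ∈ subs μ ↔ ν ≤ μ := by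
  simp [subs]

/-! ### Removable cells -/

def rcells (μ : YoungDiagram) : Finset (ℕ × ℕ) :=
  μ.cells.filter (fun c => (c.1 + 1, c.2) ∉ μ ∧ (c.1, c.2 + 1) ∉ μ)

lemma mem_rcells {μ : YoungDiagram} {x : ℕ × ℕ} :
    x ∈ rcells μ ↔ x ∈ μ ∧ (x.1 + 1, x.2) ∉ μ ∧ (x.1, x.2 + 1) ∉ μ := by
  simp [rcells, YoungDiagram.mem_cells]

open Classical in
noncomputable def eraseD (μ : YoungDiagram) (x : ℕ × ℕ) : YoungDiagram :=
  if h : IsLowerSet (↑(μ.cells.erase x) : Set (ℕ × ℕ)) then ⟨μ.cells.erase x, h⟩ else μ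

lemma cells_eraseD {μ : YoungDiagram} {x : ℕ × ℕ} (hx : x ∈ rcells μ) :
    (eraseD μ x).cells = μ.cells.erase x := by
  rw [mem_rcells] at hx
  have h : IsLowerSet (↑(μ.cells.erase x) : Set (ℕ × ℕ)) := by
    rintro ⟨a, b⟩ ⟨c, d⟩ hle hz
    simp only [Finset.coe_erase, Set.mem_diff, Finset.mem_coe, YoungDiagram.mem_cells,
      Set.mem_singleton_iff] at hz ⊢
    obtain ⟨h1, h2⟩ := Prod.mk_le_mk.mp hle
    have hμ : (c, d) ∈ μ := μ.isLowerSet hle hz.1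
    refine ⟨hμ, ?_⟩
    rintro rfl
    rcases Nat.lt_or_ge c a with hca | hca
    · exact hx.2.1 (μ.up_left_mem (by omega) h2 hz.1)
    · have hac : a = c := by omega
      have hdb : d < b := by
        rcases Nat.lt_or_ge d b with h' | h'
        · exact h'
        · exact absurd (Prod.ext hac (by omega)) hz.2
      exact hx.2.2 (μ.up_left_mem (by omega) (by omega) hz.1)
  rw [eraseD, dif_pos h]

lemma mem_eraseD {μ : YoungDiagram} {x : ℕ × ℕ} (hx : x ∈ rcells μ) {c : ℕ × ℕ} :
    c ∈ eraseD μ x ↔ c ∈ μ ∧ c ≠ x := by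
  rw [← YoungDiagram.mem_cells, cells_eraseD hx, Finset.mem_erase, YoungDiagram.mem_cells, and_comm]

lemma eraseD_le {μ : YoungDiagram} {x : ℕ × ℕ} (hx : x ∈ rcells μ) : eraseD μ x ≤ μ := by
  rw [← YoungDiagram.cells_subset_iff, cells_eraseD hx]
  exact Finset.erase_subset _ _

lemma card_eraseD {μ : YoungDiagram} {x : ℕ × ℕ} (hx : x ∈ rcells μ) :
    (eraseD μ x).card + 1 = μ.card := by
  have hxμ : x ∈ μ.cells := (mem_rcells.mp hx).1
  rw [YoungDiagram.card, YoungDiagram.card, cells_eraseD hx, Finset.card_erase_of_mem hxμ]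
  have : 0 < μ.cells.card := Finset.card_pos.mpr ⟨x, hxμ⟩
  omega

/-! ### Addable cells -/

def AddC (κ : YoungDiagram) (y : ℕ × ℕ) : Prop :=
  y ∉ κ ∧ IsLowerSet (↑(insert y κ.cells) : Set (ℕ × ℕ))

open Classical in
noncomputable def insertD (κ : YoungDiagram) (y : ℕ × ℕ) : YoungDiagram :=
  if h : IsLowerSet (↑(insert y κ.cells) : Set (ℕ × ℕ)) then ⟨insert y κ.cells, h⟩ else κ

lemma cells_insertD {κ : YoungDiagram} {y : ℕ × ℕ} (h : AddC κ y) :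
    (insertD κ y).cells = insert y κ.cells := by
  rw [insertD, dif_pos h.2]

lemma mem_insertD {κ : YoungDiagram} {y : ℕ × ℕ} (h : AddC κ y) {c : ℕ × ℕ} :
    c ∈ insertD κ y ↔ c = y ∨ c ∈ κ := by
  rw [← YoungDiagram.mem_cells, cells_insertD h, Finset.mem_insert, YoungDiagram.mem_cells]

lemma le_insertD {κ : YoungDiagram} {y : ℕ × ℕ} (h : AddC κ y) : κ ≤ insertD κ y := by
  rw [← YoungDiagram.cells_subset_iff, cells_insertD h]
  exact Finset.subset_insert _ _

lemma card_insertD {κ : YoungDiagram} {y : ℕ × ℕ} (h : AddC κ y) :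
    (insertD κ y).card = κ.card + 1 := by
  rw [YoungDiagram.card, YoungDiagram.card, cells_insertD h,
    Finset.card_insert_of_notMem (by simpa [YoungDiagram.mem_cells] using h.1)]

lemma eraseD_insertD {κ : YoungDiagram} {y : ℕ × ℕ} (h : AddC κ y) :
    eraseD (insertD κ y) y = κ := by
  have hy : y ∈ rcells (insertD κ y) := by
    rw [mem_rcells]
    refine ⟨(mem_insertD h).mpr (Or.inl rfl), ?_, ?_⟩
    · rw [mem_insertD h]
      rintro (h' | h')
      · exact absurd (congrArg Prod.fst h') (by simp)
      · exact h.1 (κ.up_left_mem (by simp) (le_refl _) h')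
    · rw [mem_insertD h]
      rintro (h' | h')
      · exact absurd (congrArg Prod.snd h') (by simp)
      · exact h.1 (κ.up_left_mem (le_refl _) (by simp) h')
  apply YoungDiagram.ext
  rw [cells_eraseD hy, cells_insertD h,
    Finset.erase_insert (by simpa [YoungDiagram.mem_cells] using h.1)]

lemma insertD_eraseD {μ : YoungDiagram} {x : ℕ × ℕ} (hx : x ∈ rcells μ) :
    insertD (eraseD μ x) x = μ := by
  have hadd : AddC (eraseD μ x) x := by
    constructor
    · rw [mem_eraseD hx]; simp
    · rw [cells_eraseD hx, Finset.insert_erase (by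
        simpa [YoungDiagram.mem_cells] using (mem_rcells.mp hx).1)]
      exact μ.isLowerSet
  apply YoungDiagram.ext
  rw [cells_insertD hadd, cells_eraseD hx,
    Finset.insert_erase (by simpa [YoungDiagram.mem_cells] using (mem_rcells.mp hx).1)]

lemma addC_eraseD {μ : YoungDiagram} {x : ℕ × ℕ} (hx : x ∈ rcells μ) :
    AddC (eraseD μ x) x := by
  constructor
  · rw [mem_eraseD hx]; simp
  · rw [cells_eraseD hx, Finset.insert_erase (by
      simpa [YoungDiagram.mem_cells] using (mem_rcells.mp hx).1)]
    exact μ.isLowerSet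

lemma rcells_insertD {κ : YoungDiagram} {y : ℕ × ℕ} (h : AddC κ y) :
    y ∈ rcells (insertD κ y) := by
  rw [mem_rcells]
  refine ⟨(mem_insertD h).mpr (Or.inl rfl), ?_, ?_⟩
  · rw [mem_insertD h]
    rintro (h' | h')
    · exact absurd (congrArg Prod.fst h') (by simp)
    · exact h.1 (κ.up_left_mem (by simp) (le_refl _) h')
  · rw [mem_insertD h]
    rintro (h' | h')
    · exact absurd (congrArg Prod.snd h') (by simp)
    · exact h.1 (κ.up_left_mem (le_refl _) (by simp) h')

/-! ### rowLen lemmas -/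

lemma mem_iff_lt_rowLen' {μ : YoungDiagram} {c : ℕ × ℕ} : c ∈ μ ↔ c.2 < μ.rowLen c.1 := by
  obtain ⟨i, j⟩ := c; exact YoungDiagram.mem_iff_lt_rowLen

lemma mem_of_le {ν μ : YoungDiagram} (h : ν ≤ μ) {c : ℕ × ℕ} (hc : c ∈ ν) : c ∈ μ :=
  (YoungDiagram.mem_cells c).mp ((YoungDiagram.cells_subset_iff.mpr h) ((YoungDiagram.mem_cells c).mpr hc))

lemma rowLen_eq' {ν : YoungDiagram} {i k : ℕ} (h2 : (i, k) ∉ ν) (h1 : k = 0 ∨ (i, k - 1) ∈ ν) :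
    ν.rowLen i = k := by
  rw [YoungDiagram.mem_iff_lt_rowLen] at h2
  rcases h1 with h1 | h1
  · omega
  · rw [YoungDiagram.mem_iff_lt_rowLen] at h1; omega

lemma rowLen_le_of_le {ν μ : YoungDiagram} (h : ν ≤ μ) (i : ℕ) : ν.rowLen i ≤ μ.rowLen i := by
  by_contra hc
  push_neg at hc
  exact absurd (mem_of_le h (YoungDiagram.mem_iff_lt_rowLen.mpr hc))
    (by rw [YoungDiagram.mem_iff_lt_rowLen]; omega)

lemma le_iff_rowLen {ν μ : YoungDiagram} : ν ≤ μ ↔ ∀ i, ν.rowLen i ≤ μ.rowLen i := by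
  constructor
  · exact fun h i => rowLen_le_of_le h i
  · intro h
    rw [← YoungDiagram.cells_subset_iff]
    intro c hc
    rw [YoungDiagram.mem_cells, mem_iff_lt_rowLen'] at hc ⊢
    exact lt_of_lt_of_le hc (h c.1)

lemma lt_colLen_of_mem {μ : YoungDiagram} {c : ℕ × ℕ} (hc : c ∈ μ) : c.1 < μ.colLen 0 := by
  rw [← YoungDiagram.mem_iff_lt_colLen]
  exact μ.up_left_mem (le_refl _) (Nat.zero_le _) (by rwa [Prod.mk.eta])

lemma rowLen_eq_zero_of {μ : YoungDiagram} {i : ℕ} (h : μ.colLen 0 ≤ i) : μ.rowLen i = 0 := by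
  by_contra hc
  have : (i, 0) ∈ μ := YoungDiagram.mem_iff_lt_rowLen.mpr (by omega)
  exact absurd (lt_colLen_of_mem this) (by omega)

lemma colLen_le_of_le {ν μ : YoungDiagram} (h : ν ≤ μ) : ν.colLen 0 ≤ μ.colLen 0 := by
  by_contra hc
  push_neg at hc
  have : (μ.colLen 0, 0) ∈ ν := YoungDiagram.mem_iff_lt_colLen.mpr hc
  exact absurd (lt_colLen_of_mem (mem_of_le h this)) (by omega)

lemma rowLen_pos_rcells {μ : YoungDiagram} {x : ℕ × ℕ} (hx : x ∈ rcells μ) :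
    μ.rowLen x.1 = x.2 + 1 ∧ μ.rowLen (x.1 + 1) ≤ x.2 := by
  rw [mem_rcells] at hx
  obtain ⟨h1, h2, h3⟩ := hx
  rw [mem_iff_lt_rowLen'] at h1
  rw [YoungDiagram.mem_iff_lt_rowLen] at h2 h3
  omega

lemma rowLen_eraseD {μ : YoungDiagram} {x : ℕ × ℕ} (hx : x ∈ rcells μ) (i : ℕ) :
    (eraseD μ x).rowLen i = if i = x.1 then μ.rowLen x.1 - 1 else μ.rowLen i := by
  obtain ⟨hr1, hr2⟩ := rowLen_pos_rcells hx
  split_ifs with h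
  · subst h
    apply rowLen_eq'
    · rw [mem_eraseD hx]
      rintro ⟨hmem, hne⟩
      rw [mem_iff_lt_rowLen'] at hmem
      simp only at hmem
      exact hne (Prod.ext rfl (by omega))
    · rcases Nat.eq_zero_or_pos x.2 with h0 | h0
      · left; omega
      · right
        rw [mem_eraseD hx]
        constructor
        · rw [mem_iff_lt_rowLen']; simp only; omega
        · intro hc
          have := congrArg Prod.snd hc
          simp only at this
          omega
  · apply rowLen_eq'
    · rw [mem_eraseD hx]
      rintro ⟨hmem, -⟩
      rw [mem_iff_lt_rowLen'] at hmem
      simp only at hmem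
      omega
    · rcases Nat.eq_zero_or_pos (μ.rowLen i) with h0 | h0
      · left; exact h0
      · right
        rw [mem_eraseD hx]
        constructor
        · rw [mem_iff_lt_rowLen']; simp only; omega
        · intro hc
          exact h (congrArg Prod.fst hc)

lemma addC_snd {κ : YoungDiagram} {y : ℕ × ℕ} (h : AddC κ y) : y.2 = κ.rowLen y.1 := by
  have hge : κ.rowLen y.1 ≤ y.2 := by
    by_contra hc
    exact h.1 (mem_iff_lt_rowLen'.mpr (by omega))
  rcases Nat.lt_or_ge (κ.rowLen y.1) y.2 with hlt | hle
  · exfalso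
    have hle : ((y.1, y.2 - 1) : ℕ × ℕ) ≤ y := Prod.le_def.mpr ⟨le_refl _, Nat.sub_le _ _⟩
    have hmem : ((y.1, y.2 - 1) : ℕ × ℕ) ∈ (↑(insert y κ.cells) : Set (ℕ × ℕ)) := by
      apply h.2 hle
      simp
    simp only [Finset.coe_insert, Set.mem_insert_iff, Finset.mem_coe,
      YoungDiagram.mem_cells] at hmem
    rcases hmem with hq | hq
    · have hq2 : y.2 - 1 = y.2 := congrArg Prod.snd hq
      omega
    · rw [YoungDiagram.mem_iff_lt_rowLen] at hq
      omega
  · omega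

lemma rowLen_insertD {κ : YoungDiagram} {y : ℕ × ℕ} (h : AddC κ y) (i : ℕ) :
    (insertD κ y).rowLen i = if i = y.1 then κ.rowLen y.1 + 1 else κ.rowLen i := by
  have hy2 := addC_snd h
  split_ifs with hi
  · subst hi
    apply rowLen_eq'
    · rw [← YoungDiagram.mem_cells, cells_insertD h, Finset.mem_insert]
      rintro (h' | h')
      · have := congrArg Prod.snd h'
        simp only at this
        omega
      · rw [YoungDiagram.mem_cells, mem_iff_lt_rowLen'] at h'
        simp only at h'
        omega
    · right
      rw [← YoungDiagram.mem_cells, cells_insertD h, Finset.mem_insert]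
      left
      simp only [Nat.add_sub_cancel]
      rw [← hy2, Prod.mk.eta]
  · apply rowLen_eq'
    · rw [← YoungDiagram.mem_cells, cells_insertD h, Finset.mem_insert]
      rintro (h' | h')
      · exact hi (congrArg Prod.fst h')
      · rw [YoungDiagram.mem_cells, mem_iff_lt_rowLen'] at h'
        simp only at h'
        omega
    · rcases Nat.eq_zero_or_pos (κ.rowLen i) with h0 | h0
      · left; exact h0
      · right
        rw [← YoungDiagram.mem_cells, cells_insertD h, Finset.mem_insert]
        right
        rw [YoungDiagram.mem_cells, mem_iff_lt_rowLen']
        simp only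
        omega

lemma addC_iff_row {κ : YoungDiagram} {i : ℕ} :
    AddC κ (i, κ.rowLen i) ↔ (i = 0 ∨ κ.rowLen i < κ.rowLen (i - 1)) := by
  constructor
  · intro h
    rcases Nat.eq_zero_or_pos i with h0 | h0
    · left; exact h0
    · right
      have hle : ((i - 1, κ.rowLen i) : ℕ × ℕ) ≤ (i, κ.rowLen i) :=
        Prod.le_def.mpr ⟨Nat.sub_le _ _, le_refl _⟩
      have hmem : ((i - 1, κ.rowLen i) : ℕ × ℕ) ∈ (↑(insert (i, κ.rowLen i) κ.cells) : Set (ℕ × ℕ)) := by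
        apply h.2 hle
        simp
      simp only [Finset.coe_insert, Set.mem_insert_iff, Finset.mem_coe,
        YoungDiagram.mem_cells] at hmem
      rcases hmem with hq | hq
      · have hq2 : i - 1 = i := congrArg Prod.fst hq
        omega
      · rw [YoungDiagram.mem_iff_lt_rowLen] at hq
        exact hq
  · intro h
    constructor
    · rw [YoungDiagram.mem_iff_lt_rowLen]; omega
    · rintro ⟨a, b⟩ ⟨c, d⟩ hle hmem
      simp only [Finset.coe_insert, Set.mem_insert_iff, Finset.mem_coe,
        YoungDiagram.mem_cells, Prod.mk.injEq] at hmem ⊢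
      obtain ⟨h1, h2⟩ := Prod.mk_le_mk.mp hle
      rcases hmem with ⟨rfl, rfl⟩ | hmem
      · by_cases hc : c = a ∧ d = κ.rowLen a
        · left; exact hc
        · right
          rw [YoungDiagram.mem_iff_lt_rowLen]
          rcases Nat.lt_or_ge c a with hca | hca
          · have : a ≠ 0 := by omega
            have h' : κ.rowLen (a - 1) ≤ κ.rowLen c := κ.rowLen_anti c (a - 1) (by omega)
            rcases h with h | h
            · omega
            · omega
          · have : c = a := by omega
            subst this
            have : d ≠ κ.rowLen c := fun hd => hc ⟨rfl, hd⟩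
            omega
      · right
        rw [YoungDiagram.mem_iff_lt_rowLen]
        rw [YoungDiagram.mem_iff_lt_rowLen] at hmem
        have h' : κ.rowLen a ≤ κ.rowLen c := κ.rowLen_anti c a h1
        omega

lemma card_rowLens (μ : YoungDiagram) (N : ℕ) (hN : μ.colLen 0 ≤ N) :
    μ.card = ∑ i ∈ Finset.range N, μ.rowLen i := by
  show μ.cells.card = _
  rw [Finset.card_eq_sum_card_fiberwise (f := fun c => c.1) (t := Finset.range N)
    (fun c hc => Finset.mem_range.mpr (lt_of_lt_of_le
      (lt_colLen_of_mem ((YoungDiagram.mem_cells c).mp hc)) hN))]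
  apply Finset.sum_congr rfl
  intro i _
  rw [μ.rowLen_eq_card]
  congr 1


/-! ### The local row identity -/

def StripC (g f : ℕ → ℕ) : Prop := (∀ t, g t ≤ f t) ∧ (∀ t, f (t + 1) ≤ g t)

def AG (g f : ℕ → ℕ) (i : ℕ) : Prop :=
  (i = 0 ∨ g i < g (i - 1)) ∧ (∀ t, (if t = i then g t + 1 else g t) ≤ f t) ∧
    (∀ t, f (t + 1) ≤ (if t = i then g t + 1 else g t))

def RG (g f : ℕ → ℕ) (r : ℕ) : Prop :=
  f (r + 1) < f r ∧ (∀ t, g t ≤ (if t = r then f t - 1 else f t)) ∧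
    (∀ t, (if t + 1 = r then f (t + 1) - 1 else f (t + 1)) ≤ g t)

lemma rg_zero_strip {g f : ℕ → ℕ} (h : RG g f 0) : StripC g f := by
  obtain ⟨-, h2, h3⟩ := h
  constructor
  · intro t
    have := h2 t
    split_ifs at this with ht
    · omega
    · exact this
  · intro t
    have := h3 t
    simp only [Nat.succ_ne_zero, if_neg (by omega : ¬ t + 1 = 0)] at this
    exact this

lemma ag_of_rg_succ {g f : ℕ → ℕ} (hf : ∀ t, f (t + 1) ≤ f t) (hg : ∀ t, g (t + 1) ≤ g t)
    {i : ℕ} (hns : ¬ StripC g f) (h : RG g f (i + 1)) :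
    AG g f i ∧ f (i + 1) = g i + 1 := by
  obtain ⟨h1, h2, h3⟩ := h
  have hgf : ∀ t, g t ≤ f t := by
    intro t
    have := h2 t
    split_ifs at this with ht
    · omega
    · exact this
  have hfg : ∀ t, t ≠ i → f (t + 1) ≤ g t := by
    intro t ht
    have := h3 t
    rw [if_neg (by omega)] at this
    exact this
  have hkey : f (i + 1) = g i + 1 := by
    have hub : f (i + 1) - 1 ≤ g i := by
      have := h3 i
      rw [if_pos rfl] at this
      exact this
    by_contra hc
    rcases Nat.lt_or_ge (g i) (f (i + 1)) with hlt | hle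
    · omega
    · exact hns ⟨hgf, fun t => by
        by_cases ht : t = i
        · subst ht; exact hle
        · exact hfg t ht⟩
  refine ⟨⟨?_, ?_, ?_⟩, hkey⟩
  · rcases i with _ | k
    · left; rfl
    · right
      have ha : f (k + 1) ≤ g k := hfg k (by omega)
      have hb := hf (k + 1)
      simp only [Nat.add_sub_cancel]
      omega
  · intro t
    by_cases ht : t = i
    · subst ht
      rw [if_pos rfl, ← hkey]
      exact hf _
    · rw [if_neg ht]; exact hgf t
  · intro t
    by_cases ht : t = i
    · subst ht; rw [if_pos rfl]; omega
    · rw [if_neg ht]; exact hfg t ht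

lemma rg_succ_of_ag {g f : ℕ → ℕ} (hf : ∀ t, f (t + 1) ≤ f t) (hg : ∀ t, g (t + 1) ≤ g t)
    {i : ℕ} (hns : ¬ StripC g f) (h : AG g f i) :
    RG g f (i + 1) ∧ f (i + 1) = g i + 1 := by
  obtain ⟨h1, h2, h3⟩ := h
  have hgf : ∀ t, g t ≤ f t := by
    intro t
    have := h2 t
    split_ifs at this with ht
    · omega
    · exact this
  have hfg : ∀ t, t ≠ i → f (t + 1) ≤ g t := by
    intro t ht
    have := h3 t
    rw [if_neg ht] at this
    exact this
  have hkey : f (i + 1) = g i + 1 := by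
    have hub : f (i + 1) ≤ g i + 1 := by
      have := h3 i
      rw [if_pos rfl] at this
      exact this
    by_contra hc
    rcases Nat.lt_or_ge (g i) (f (i + 1)) with hlt | hle
    · omega
    · exact hns ⟨hgf, fun t => by
        by_cases ht : t = i
        · subst ht; exact hle
        · exact hfg t ht⟩
  refine ⟨⟨?_, ?_, ?_⟩, hkey⟩
  · have ha := hfg (i + 1) (by omega)
    have hb := hg i
    omega
  · intro t
    by_cases ht : t = i + 1
    · subst ht
      rw [if_pos rfl, hkey]
      have := hg i
      omega
    · rw [if_neg ht]; exact hgf t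
  · intro t
    by_cases ht : t = i
    · subst ht; rw [if_pos rfl]; omega
    · rw [if_neg (by omega : ¬ t + 1 = i + 1)]; exact hfg t ht

open scoped Classical

lemma star (f g : ℕ → ℕ) (hf : ∀ t, f (t + 1) ≤ f t) (hg : ∀ t, g (t + 1) ≤ g t)
    (N : ℕ) (hN0 : 0 < N) (hN : f (N - 1) = 0) (D : ℚ) :
    (if StripC g f then ∑ i ∈ Finset.range N, ((f i : ℚ) - g i) else 0)
      + ∑ i ∈ Finset.range N, (if AG g f i then (D + g i - i) else 0)
    = ∑ i ∈ Finset.range N, (if RG g f i then (D + f i - i) else 0) := by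
  by_cases hS : StripC g f
  · rw [if_pos hS, ← Finset.sum_add_distrib]
    apply Finset.sum_congr rfl
    intro i _
    by_cases hlt : g i < f i
    · have hAG : AG g f i := by
        refine ⟨?_, ?_, ?_⟩
        · by_cases h0 : i = 0
          · left; exact h0
          · right
            have h1 := hS.2 (i - 1)
            have h2 : i - 1 + 1 = i := by omega
            rw [h2] at h1
            omega
        · intro t
          by_cases ht : t = i
          · subst ht; rw [if_pos rfl]; omega
          · rw [if_neg ht]; exact hS.1 t
        · intro t
          by_cases ht : t = i
          · subst ht; rw [if_pos rfl]
            have := hS.2 t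
            omega
          · rw [if_neg ht]; exact hS.2 t
      have hRG : RG g f i := by
        refine ⟨?_, ?_, ?_⟩
        · have := hS.2 i
          omega
        · intro t
          by_cases ht : t = i
          · subst ht; rw [if_pos rfl]; omega
          · rw [if_neg ht]; exact hS.1 t
        · intro t
          by_cases ht : t + 1 = i
          · rw [if_pos ht]
            have h1 := hf t
            have h2 := hS.2 t
            omega
          · rw [if_neg ht]; exact hS.2 t
      rw [if_pos hAG, if_pos hRG]
      have hle : g i ≤ f i := hS.1 i
      push_cast
      ring
    · have hfi : f i = g i := le_antisymm (by omega) (hS.1 i)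
      have hAG : ¬ AG g f i := by
        rintro ⟨-, h2, -⟩
        have := h2 i
        rw [if_pos rfl] at this
        omega
      have hRG : ¬ RG g f i := by
        rintro ⟨h1, h2, -⟩
        have := h2 i
        rw [if_pos rfl] at this
        omega
      rw [if_neg hAG, if_neg hRG, hfi]
      ring
  · rw [if_neg hS, zero_add]
    have hag_rg : ∀ i, (if AG g f i then (D + (g i : ℚ) - i) else 0)
        = (if RG g f (i + 1) then (D + (f (i + 1) : ℚ)- (i + 1)) else 0) := by
      intro i
      by_cases hA : AG g f i
      · obtain ⟨hR, hk⟩ := rg_succ_of_ag hf hg hS hA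
        rw [if_pos hA, if_pos hR, hk]
        push_cast
        ring
      · have hR : ¬ RG g f (i + 1) := fun hR => hA (ag_of_rg_succ hf hg hS hR).1
        rw [if_neg hA, if_neg hR]
    obtain ⟨M, rfl⟩ : ∃ M, N = M + 1 := ⟨N - 1, by omega⟩
    rw [Finset.sum_range_succ, Finset.sum_range_succ']
    have hAGtop : ¬ AG g f M := by
      rintro ⟨-, h2, -⟩
      have := h2 M
      rw [if_pos rfl] at this
      simp only [Nat.add_sub_cancel] at hN
      omega
    have hRG0 : ¬ RG g f 0 := fun h => hS (rg_zero_strip h)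
    rw [if_neg hAGtop, if_neg hRG0, add_zero, add_zero]
    apply Finset.sum_congr rfl
    intro i _
    have := hag_rg i
    push_cast at this ⊢
    exact this


/-! ### Horizontal strips -/

noncomputable def strips (μ : YoungDiagram) : Finset YoungDiagram :=
  (subs μ).filter (fun l => ∀ t, μ.rowLen (t + 1) ≤ l.rowLen t)

lemma mem_strips {μ l : YoungDiagram} :
    l ∈ strips μ ↔ l ≤ μ ∧ ∀ t, μ.rowLen (t + 1) ≤ l.rowLen t := by
  simp [strips, mem_subs]

lemma mem_strips_iff_stripC {μ l : YoungDiagram} :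
    l ∈ strips μ ↔ StripC l.rowLen μ.rowLen := by
  rw [mem_strips, le_iff_rowLen]
  exact Iff.rfl

lemma strips_le {μ l : YoungDiagram} (h : l ∈ strips μ) : l ≤ μ := (mem_strips.mp h).1

/-! ### addable/removable cell sets relative to strips -/

noncomputable def aset (κ μ : YoungDiagram) : Finset (ℕ × ℕ) :=
  μ.cells.filter (fun y => AddC κ y ∧ insertD κ y ∈ strips μ)

noncomputable def rset (κ μ : YoungDiagram) : Finset (ℕ × ℕ) :=
  (rcells μ).filter (fun x => κ ∈ strips (eraseD μ x))

lemma mem_aset {κ μ : YoungDiagram} {y : ℕ × ℕ} :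
    y ∈ aset κ μ ↔ AddC κ y ∧ insertD κ y ∈ strips μ := by
  rw [aset, Finset.mem_filter]
  constructor
  · exact fun h => h.2
  · intro h
    refine ⟨?_, h⟩
    rw [YoungDiagram.mem_cells]
    exact mem_of_le (strips_le h.2) ((mem_insertD h.1).mpr (Or.inl rfl))

lemma mem_rset {κ μ : YoungDiagram} {x : ℕ × ℕ} :
    x ∈ rset κ μ ↔ x ∈ rcells μ ∧ κ ∈ strips (eraseD μ x) := by
  rw [rset, Finset.mem_filter]

lemma mem_aset_row {κ μ : YoungDiagram} {y : ℕ × ℕ} :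
    y ∈ aset κ μ ↔ y.2 = κ.rowLen y.1 ∧ AG κ.rowLen μ.rowLen y.1 := by
  rw [mem_aset]
  constructor
  · rintro ⟨hA, hs⟩
    have hy2 := addC_snd hA
    have hy : y = (y.1, κ.rowLen y.1) := Prod.ext rfl hy2
    rw [mem_strips_iff_stripC] at hs
    refine ⟨hy2, ?_, ?_, ?_⟩
    · exact addC_iff_row.mp (hy ▸ hA)
    · intro t
      have h1 := hs.1 t
      rw [rowLen_insertD hA] at h1
      split_ifs at h1 with ht <;> split_ifs with ht' <;> first | (exfalso; omega) | (subst ht; exact h1) | exact h1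
    · intro t
      have h1 := hs.2 t
      rw [rowLen_insertD hA] at h1
      split_ifs at h1 with ht <;> split_ifs with ht' <;> first | (exfalso; omega) | (subst ht; exact h1) | exact h1
  · rintro ⟨hy2, hadd, h1, h2⟩
    have hy : y = (y.1, κ.rowLen y.1) := Prod.ext rfl hy2
    have hA : AddC κ y := hy ▸ addC_iff_row.mpr hadd
    refine ⟨hA, ?_⟩
    rw [mem_strips_iff_stripC]
    constructor
    · intro t
      rw [rowLen_insertD hA]
      have := h1 t
      split_ifs with ht
      · subst ht; rw [if_pos rfl] at this; omega
      · rw [if_neg ht] at this; exact this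
    · intro t
      rw [rowLen_insertD hA]
      have := h2 t
      split_ifs with ht
      · subst ht; rw [if_pos rfl] at this; omega
      · rw [if_neg ht] at this; exact this

lemma mem_rset_row {κ μ : YoungDiagram} {x : ℕ × ℕ} :
    x ∈ rset κ μ ↔ x.2 + 1 = μ.rowLen x.1 ∧ RG κ.rowLen μ.rowLen x.1 := by
  rw [mem_rset]
  constructor
  · rintro ⟨hr, hs⟩
    obtain ⟨hr1, hr2⟩ := rowLen_pos_rcells hr
    rw [mem_strips_iff_stripC] at hs
    refine ⟨hr1.symm, ?_, ?_, ?_⟩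
    · omega
    · intro t
      have := hs.1 t
      rw [rowLen_eraseD hr] at this
      split_ifs with ht
      · rw [if_pos ht] at this
        rw [ht]
        rw [ht] at this
        exact this
      · rw [if_neg ht] at this
        exact this
    · intro t
      have := hs.2 t
      rw [rowLen_eraseD hr] at this
      split_ifs with ht
      · rw [if_pos ht] at this
        rw [ht]
        exact this
      · rw [if_neg ht] at this
        exact this
  · rintro ⟨hx2, h0, h1, h2⟩
    have hr : x ∈ rcells μ := by
      rw [mem_rcells, mem_iff_lt_rowLen']
      refine ⟨by omega, ?_, ?_⟩
      · rw [YoungDiagram.mem_iff_lt_rowLen]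
        omega
      · rw [YoungDiagram.mem_iff_lt_rowLen]
        omega
    refine ⟨hr, ?_⟩
    rw [mem_strips_iff_stripC]
    constructor
    · intro t
      rw [rowLen_eraseD hr]
      have := h1 t
      split_ifs with ht
      · subst ht; rw [if_pos rfl] at this; omega
      · rw [if_neg ht] at this; exact this
    · intro t
      rw [rowLen_eraseD hr]
      have := h2 t
      split_ifs with ht
      · rw [if_pos ht] at this; rw [← ht]; omega
      · rw [if_neg ht] at this; exact this

lemma aset_sum (κ μ : YoungDiagram) (N : ℕ) (hN : ∀ y ∈ aset κ μ, y.1 < N) (D : ℚ) :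
    ∑ y ∈ aset κ μ, (D + (y.2 : ℚ) - y.1)
      = ∑ i ∈ Finset.range N, (if AG κ.rowLen μ.rowLen i then (D + κ.rowLen i - i) else 0) := by
  rw [← Finset.sum_filter]
  apply Finset.sum_nbij' (i := fun y => y.1) (j := fun i => (i, κ.rowLen i))
  · intro y hy
    rw [Finset.mem_filter, Finset.mem_range]
    exact ⟨hN y hy, (mem_aset_row.mp hy).2⟩
  · intro i hi
    rw [Finset.mem_filter] at hi
    rw [mem_aset_row]
    exact ⟨rfl, hi.2⟩
  · intro y hy
    have h := (mem_aset_row.mp hy).1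
    cases y
    simp_all
  · intro i _
    rfl
  · intro y hy
    rw [(mem_aset_row.mp hy).1]

lemma rset_sum (κ μ : YoungDiagram) (N : ℕ) (hN : ∀ x ∈ rset κ μ, x.1 < N) (D : ℚ) :
    ∑ x ∈ rset κ μ, ((D + 1) + (x.2 : ℚ) - x.1)
      = ∑ i ∈ Finset.range N, (if RG κ.rowLen μ.rowLen i then (D + μ.rowLen i - i) else 0) := by
  rw [← Finset.sum_filter]
  apply Finset.sum_nbij' (i := fun x => x.1) (j := fun i => (i, μ.rowLen i - 1))
  · intro x hx
    rw [Finset.mem_filter, Finset.mem_range]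
    exact ⟨hN x hx, (mem_rset_row.mp hx).2⟩
  · intro i hi
    rw [Finset.mem_filter] at hi
    rw [mem_rset_row]
    have h2 : μ.rowLen (i + 1) < μ.rowLen i := hi.2.1
    refine ⟨?_, hi.2⟩
    show μ.rowLen i - 1 + 1 = μ.rowLen i
    omega
  · intro x hx
    have h := (mem_rset_row.mp hx).1
    cases x
    simp_all
    omega
  · intro i _
    rfl
  · intro x hx
    have h1 := (mem_rset_row.mp hx).1
    have h2 : (x.2 : ℚ) = (μ.rowLen x.1 : ℚ) - 1 := by
      have h3 := congrArg (fun (n : ℕ) => (n : ℚ)) h1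
      push_cast at h3
      linarith
    rw [h2]
    ring


/-! ### Counting semistandard tableaux -/

lemma ssyt_ext_cells {μ : YoungDiagram} {T T' : SemistandardYoungTableau μ}
    (h : ∀ c : ℕ × ℕ, c ∈ μ → T c.1 c.2 = T' c.1 c.2) : T = T' := by
  ext i j
  by_cases hm : (i, j) ∈ μ
  · exact h (i, j) hm
  · rw [T.zeros hm, T'.zeros hm]

instance btFinite (μ : YoungDiagram) (d : ℕ) :
    Finite {T : SemistandardYoungTableau μ // ∀ i j : ℕ, (i, j) ∈ μ → T i j < d} := by
  apply Finite.of_injective (β := ↥μ.cells → Fin d)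
    (fun T => fun c => ⟨T.1 c.1.1 c.1.2, T.2 c.1.1 c.1.2 (by
      rw [Prod.mk.eta]; exact (YoungDiagram.mem_cells _).mp c.2)⟩)
  intro T T' h
  apply Subtype.ext
  apply ssyt_ext_cells
  intro c hc
  have := congrFun h ⟨c, (YoungDiagram.mem_cells c).mpr hc⟩
  exact congrArg Fin.val this

lemma ssytCount_bot (d : ℕ) : ssytCount ⊥ d = 1 := by
  rw [ssytCount]
  haveI : Nonempty {T : SemistandardYoungTableau ⊥ // ∀ i j : ℕ, (i, j) ∈ (⊥ : YoungDiagram) → T i j < d} :=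
    ⟨⟨default, fun i j h => absurd h (YoungDiagram.notMem_bot _)⟩⟩
  haveI : Subsingleton {T : SemistandardYoungTableau ⊥ // ∀ i j : ℕ, (i, j) ∈ (⊥ : YoungDiagram) → T i j < d} := by
    constructor
    intro T T'
    apply Subtype.ext
    apply ssyt_ext_cells
    intro c hc
    exact absurd hc (YoungDiagram.notMem_bot _)
  exact Nat.card_unique

lemma bot_of_card_zero {μ : YoungDiagram} (h : μ.card = 0) : μ = ⊥ := by
  apply YoungDiagram.ext
  rw [YoungDiagram.cells_bot]
  exact Finset.card_eq_zero.mp h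

lemma zero_mem_of_ne_bot {μ : YoungDiagram} (h : μ ≠ ⊥) : ((0, 0) : ℕ × ℕ) ∈ μ := by
  have : μ.cells.Nonempty := by
    rw [Finset.nonempty_iff_ne_empty]
    intro hc
    exact h (by apply YoungDiagram.ext; rw [YoungDiagram.cells_bot]; exact hc)
  obtain ⟨c, hc⟩ := this
  exact μ.up_left_mem (Nat.zero_le _) (Nat.zero_le _) ((YoungDiagram.mem_cells c).mp hc)

lemma ssytCount_d_zero {μ : YoungDiagram} (h : μ ≠ ⊥) : ssytCount μ 0 = 0 := by
  rw [ssytCount]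
  haveI : IsEmpty {T : SemistandardYoungTableau μ // ∀ i j : ℕ, (i, j) ∈ μ → T i j < 0} := by
    constructor
    rintro ⟨T, hT⟩
    exact absurd (hT 0 0 (zero_mem_of_ne_bot h)) (by omega)
  exact Nat.card_of_isEmpty

lemma ssytCount_pos {μ : YoungDiagram} {d : ℕ} (h : μ.colLen 0 ≤ d) : 0 < ssytCount μ d := by
  rw [ssytCount]
  haveI : Nonempty {T : SemistandardYoungTableau μ // ∀ i j : ℕ, (i, j) ∈ μ → T i j < d} := by
    refine ⟨⟨SemistandardYoungTableau.highestWeight μ, ?_⟩⟩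
    intro i j hm
    rw [SemistandardYoungTableau.highestWeight_apply, if_pos hm]
    exact lt_of_lt_of_le (lt_colLen_of_mem hm) h
  exact Nat.card_pos

/-! ### The cut/extend bijection (branching rule) -/

lemma rowLen_le_of_forall {μ ν : YoungDiagram} {a b : ℕ} (h : ∀ j, (a, j) ∈ μ → (b, j) ∈ ν) :
    μ.rowLen a ≤ ν.rowLen b := by
  by_contra hc
  push_neg at hc
  have h1 : (a, ν.rowLen b) ∈ μ := YoungDiagram.mem_iff_lt_rowLen.mpr hc
  have h2 := h _ h1
  rw [YoungDiagram.mem_iff_lt_rowLen] at h2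
  omega

def cut (μ : YoungDiagram) (d : ℕ) (T : SemistandardYoungTableau μ) : YoungDiagram where
  cells := μ.cells.filter (fun c => T c.1 c.2 < d)
  isLowerSet := by
    rintro ⟨a, b⟩ ⟨c, e⟩ hle hm
    simp only [Finset.coe_filter, Set.mem_setOf_eq, Finset.mem_coe, YoungDiagram.mem_cells] at hm ⊢
    obtain ⟨h1, h2⟩ := Prod.mk_le_mk.mp hle
    have hcm : (c, e) ∈ μ := μ.isLowerSet hle hm.1
    refine ⟨hcm, ?_⟩
    calc T c e ≤ T a e := T.col_weak h1 (μ.up_left_mem (le_refl _) h2 hm.1)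
    _ ≤ T a b := T.row_weak_of_le h2 hm.1
    _ < d := hm.2

lemma mem_cut {μ : YoungDiagram} {d : ℕ} {T : SemistandardYoungTableau μ} {c : ℕ × ℕ} :
    c ∈ cut μ d T ↔ c ∈ μ ∧ T c.1 c.2 < d := by
  rw [← YoungDiagram.mem_cells]
  simp [cut, YoungDiagram.mem_cells]

lemma cut_le {μ : YoungDiagram} {d : ℕ} {T : SemistandardYoungTableau μ} : cut μ d T ≤ μ := by
  rw [← YoungDiagram.cells_subset_iff]
  intro c hc
  rw [YoungDiagram.mem_cells, mem_cut] at hc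
  exact (YoungDiagram.mem_cells c).mpr hc.1

lemma cut_mem_strips {μ : YoungDiagram} {d : ℕ} {T : SemistandardYoungTableau μ}
    (hT : ∀ i j : ℕ, (i, j) ∈ μ → T i j < d + 1) : cut μ d T ∈ strips μ := by
  rw [mem_strips]
  refine ⟨cut_le, ?_⟩
  intro t
  apply rowLen_le_of_forall
  intro j hm
  rw [mem_cut]
  dsimp only
  refine ⟨μ.up_left_mem (by omega) (le_refl _) hm, ?_⟩
  have h1 : T t j < T (t + 1) j := T.col_strict (by omega) hm
  have h2 := hT (t + 1) j hm
  omega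

def restrict (μ : YoungDiagram) (d : ℕ) (T : SemistandardYoungTableau μ) :
    SemistandardYoungTableau (cut μ d T) where
  entry i j := if (i, j) ∈ cut μ d T then T i j else 0
  row_weak' := by
    intro i j1 j2 hj hm
    have hm1 : (i, j1) ∈ cut μ d T :=
      (cut μ d T).up_left_mem (le_refl _) (le_of_lt hj) hm
    rw [if_pos hm, if_pos hm1]
    exact T.row_weak hj (mem_cut.mp hm).1
  col_strict' := by
    intro i1 i2 j hi hm
    have hm1 : (i1, j) ∈ cut μ d T :=
      (cut μ d T).up_left_mem (le_of_lt hi) (le_refl _) hm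
    rw [if_pos hm, if_pos hm1]
    exact T.col_strict hi (mem_cut.mp hm).1
  zeros' := by
    intro i j hm
    rw [if_neg hm]

lemma restrict_lt {μ : YoungDiagram} {d : ℕ} {T : SemistandardYoungTableau μ} :
    ∀ i j : ℕ, (i, j) ∈ cut μ d T → (restrict μ d T) i j < d := by
  intro i j hm
  show (if (i, j) ∈ cut μ d T then T i j else 0) < d
  rw [if_pos hm]
  exact (mem_cut.mp hm).2

def extend (μ : YoungDiagram) (d : ℕ) (l : YoungDiagram) (hl : l ∈ strips μ)
    (S : SemistandardYoungTableau l) (hS : ∀ i j : ℕ, (i, j) ∈ l → S i j < d) :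
    SemistandardYoungTableau μ where
  entry i j := if (i, j) ∈ l then S i j else if (i, j) ∈ μ then d else 0
  row_weak' := by
    intro i j1 j2 hj hm
    by_cases h2 : (i, j2) ∈ l
    · have h1 : (i, j1) ∈ l := l.up_left_mem (le_refl _) (le_of_lt hj) h2
      rw [if_pos h2, if_pos h1]
      exact S.row_weak hj h2
    · rw [if_neg h2, if_pos hm]
      by_cases h1 : (i, j1) ∈ l
      · rw [if_pos h1]
        exact le_of_lt (hS _ _ h1)
      · rw [if_neg h1, if_pos (μ.up_left_mem (le_refl _) (le_of_lt hj) hm)]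
  col_strict' := by
    intro i1 i2 j hi hm
    have hstep : (i1 + 1, j) ∈ μ := μ.up_left_mem (by omega) (le_refl _) hm
    have h1 : (i1, j) ∈ l := by
      rw [YoungDiagram.mem_iff_lt_rowLen]
      rw [YoungDiagram.mem_iff_lt_rowLen] at hstep
      exact lt_of_lt_of_le hstep ((mem_strips.mp hl).2 i1)
    rw [if_pos h1]
    by_cases h2 : (i2, j) ∈ l
    · rw [if_pos h2]
      exact S.col_strict hi h2
    · rw [if_neg h2, if_pos hm]
      exact hS _ _ h1
  zeros' := by
    intro i j hm
    have h1 : (i, j) ∉ l := fun hc => hm (mem_of_le (strips_le hl) hc)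
    rw [if_neg h1, if_neg hm]

lemma extend_lt {μ : YoungDiagram} {d : ℕ} {l : YoungDiagram} (hl : l ∈ strips μ)
    (S : SemistandardYoungTableau l) (hS : ∀ i j : ℕ, (i, j) ∈ l → S i j < d) :
    ∀ i j : ℕ, (i, j) ∈ μ → (extend μ d l hl S hS) i j < d + 1 := by
  intro i j hm
  show (if (i, j) ∈ l then S i j else if (i, j) ∈ μ then d else 0) < d + 1
  by_cases h1 : (i, j) ∈ l
  · rw [if_pos h1]
    exact lt_trans (hS _ _ h1) (by omega)
  · rw [if_neg h1, if_pos hm]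
    omega

lemma cut_extend {μ : YoungDiagram} {d : ℕ} {l : YoungDiagram} (hl : l ∈ strips μ)
    (S : SemistandardYoungTableau l) (hS : ∀ i j : ℕ, (i, j) ∈ l → S i j < d) :
    cut μ d (extend μ d l hl S hS) = l := by
  apply YoungDiagram.ext
  apply Finset.ext
  intro c
  rw [YoungDiagram.mem_cells, YoungDiagram.mem_cells, mem_cut]
  show (c ∈ μ ∧ (if (c.1, c.2) ∈ l then S c.1 c.2 else if (c.1, c.2) ∈ μ then d else 0) < d) ↔ c ∈ l
  rw [Prod.mk.eta]
  constructor
  · rintro ⟨hcμ, hlt⟩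
    by_contra hc
    rw [if_neg hc, if_pos hcμ] at hlt
    omega
  · intro hc
    refine ⟨mem_of_le (strips_le hl) hc, ?_⟩
    rw [if_pos hc]
    exact hS _ _ hc

lemma sigma_helper {μ : YoungDiagram} {d : ℕ}
    (a b : Σ l : ↥(strips μ), {S : SemistandardYoungTableau l.1 // ∀ i j : ℕ, (i, j) ∈ l.1 → S i j < d})
    (h1 : a.1.1 = b.1.1) (h2 : ∀ i j, a.2.1 i j = b.2.1 i j) : a = b := by
  obtain ⟨⟨la, ha⟩, Sa⟩ := a
  obtain ⟨⟨lb, hb⟩, Sb⟩ := b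
  simp only at h1 h2
  subst h1
  have : Sa = Sb := Subtype.ext (SemistandardYoungTableau.ext (fun i j => h2 i j))
  subst this
  rfl

lemma ssytCount_branch (μ : YoungDiagram) (d : ℕ) :
    ssytCount μ (d + 1) = ∑ l ∈ strips μ, ssytCount l d := by
  classical
  rw [ssytCount]
  have e : {T : SemistandardYoungTableau μ // ∀ i j : ℕ, (i, j) ∈ μ → T i j < d + 1} ≃
      Σ l : ↥(strips μ), {S : SemistandardYoungTableau l.1 // ∀ i j : ℕ, (i, j) ∈ l.1 → S i j < d} :=
    { toFun := fun T => ⟨⟨cut μ d T.1, cut_mem_strips T.2⟩, ⟨restrict μ d T.1, restrict_lt⟩⟩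
      invFun := fun p => ⟨extend μ d p.1.1 p.1.2 p.2.1 p.2.2, extend_lt p.1.2 p.2.1 p.2.2⟩
      left_inv := by
        rintro ⟨T, hT⟩
        apply Subtype.ext
        apply ssyt_ext_cells
        rintro ⟨i, j⟩ hm
        show (if (i, j) ∈ cut μ d T then (restrict μ d T) i j else
          if (i, j) ∈ μ then d else 0) = T i j
        by_cases h1 : (i, j) ∈ cut μ d T
        · rw [if_pos h1]
          show (if (i, j) ∈ cut μ d T then T i j else 0) = T i j
          rw [if_pos h1]
        · rw [if_neg h1, if_pos hm]
          rw [mem_cut] at h1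
          have := hT i j hm
          simp only [hm, true_and] at h1
          omega
      right_inv := by
        rintro ⟨⟨l, hl⟩, S, hS⟩
        apply sigma_helper
        · exact cut_extend hl S hS
        · intro i j
          show (if (i, j) ∈ cut μ d (extend μ d l hl S hS) then
            (extend μ d l hl S hS) i j else 0) = S i j
          rw [cut_extend hl S hS]
          by_cases h1 : (i, j) ∈ l
          · rw [if_pos h1]
            show (if (i, j) ∈ l then S i j else if (i, j) ∈ μ then d else 0) = S i j
            rw [if_pos h1]
          · rw [if_neg h1, S.zeros h1] }
  rw [Nat.card_congr e]
  haveI : ∀ l : ↥(strips μ), Fintype {S : SemistandardYoungTableau l.1 // ∀ i j : ℕ, (i, j) ∈ l.1 → S i j < d} :=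
    fun l => Fintype.ofFinite _
  rw [Nat.card_eq_fintype_card, Fintype.card_sigma]
  rw [← Finset.sum_coe_sort (strips μ) (fun l => ssytCount l d)]
  apply Finset.sum_congr rfl
  intro l _
  simp only [ssytCount, Nat.card_eq_fintype_card]


/-! ### The content recurrence -/

lemma mem_of_aset {κ μ : YoungDiagram} {y : ℕ × ℕ} (h : y ∈ aset κ μ) : y ∈ μ :=
  (YoungDiagram.mem_cells _).mp (Finset.mem_filter.mp h).1

lemma mem_of_rset {κ μ : YoungDiagram} {x : ℕ × ℕ} (h : x ∈ rset κ μ) : x ∈ μ :=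
  (mem_rcells.mp (mem_rset.mp h).1).1

theorem identB (d : ℕ) (μ : YoungDiagram) :
    (μ.card : ℚ) * (ssytCount μ d : ℚ)
      = ∑ x ∈ rcells μ, (((d : ℚ) + x.2 - x.1) * (ssytCount (eraseD μ x) d : ℚ)) := by
  induction d generalizing μ with
  | zero =>
    by_cases hμ : μ = ⊥
    · subst hμ
      have h1 : (⊥ : YoungDiagram).card = 0 := by
        show (⊥ : YoungDiagram).cells.card = 0
        rw [YoungDiagram.cells_bot]
        rfl
      have h2 : rcells (⊥ : YoungDiagram) = ∅ := by
        apply Finset.eq_empty_of_forall_notMem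
        intro x hx
        exact YoungDiagram.notMem_bot _ (mem_rcells.mp hx).1
      rw [h1, h2]
      simp
    · rw [ssytCount_d_zero hμ]
      rw [Nat.cast_zero, mul_zero]
      symm
      apply Finset.sum_eq_zero
      intro x hx
      by_cases h : eraseD μ x = ⊥
      · have h0 : μ.cells.erase x = ∅ := by
          rw [← cells_eraseD hx, h, YoungDiagram.cells_bot]
        have hx0 : x = (0, 0) := by
          by_contra hc
          have : ((0, 0) : ℕ × ℕ) ∈ μ.cells.erase x :=
            Finset.mem_erase.mpr ⟨fun he => hc he.symm, (YoungDiagram.mem_cells _).mpr (zero_mem_of_ne_bot hμ)⟩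
          rw [h0] at this
          exact absurd this (Finset.notMem_empty _)
        subst hx0
        norm_num
      · rw [ssytCount_d_zero h]
        rw [Nat.cast_zero, mul_zero]
  | succ d IH =>
    classical
    set N := μ.colLen 0 + 1 with hNdef
    have hfN : μ.rowLen (N - 1) = 0 := rowLen_eq_zero_of (by omega)
    have hcard : μ.card = ∑ i ∈ Finset.range N, μ.rowLen i := card_rowLens μ N (by omega)
    have hbound : ∀ c : ℕ × ℕ, c ∈ μ → c.1 < N := fun c hc => by
      have := lt_colLen_of_mem hc
      omega
    -- Step 2 : rewrite each branch summand using the inductive hypothesis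
    have step2 : ∀ l ∈ strips μ,
        (μ.card : ℚ) * (ssytCount l d : ℚ)
          = (∑ i ∈ Finset.range N, ((μ.rowLen i : ℚ) - l.rowLen i)) * (ssytCount l d : ℚ)
            + ∑ y ∈ rcells l, (((d : ℚ) + y.2 - y.1) * (ssytCount (eraseD l y) d : ℚ)) := by
      intro l hl
      have hcl : l.card = ∑ i ∈ Finset.range N, l.rowLen i :=
        card_rowLens l N (le_trans (colLen_le_of_le (strips_le hl)) (by omega))
      have hsum : (∑ i ∈ Finset.range N, ((μ.rowLen i : ℚ) - l.rowLen i))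
          = (μ.card : ℚ) - l.card := by
        rw [hcard, hcl, Finset.sum_sub_distrib]
        push_cast
        ring
      rw [hsum, ← IH l]
      ring
    -- S2 : reindex the double sum over (strip, removable cell) pairs
    have hS2 : ∑ l ∈ strips μ, ∑ y ∈ rcells l, (((d : ℚ) + y.2 - y.1) * (ssytCount (eraseD l y) d : ℚ))
        = ∑ κ ∈ subs μ, ∑ y ∈ aset κ μ, (((d : ℚ) + y.2 - y.1) * (ssytCount κ d : ℚ)) := by
      rw [← Finset.sum_sigma (strips μ) (fun l => rcells l)
        (fun p => ((d : ℚ) + p.2.2 - p.2.1) * (ssytCount (eraseD p.1 p.2) d : ℚ))]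
      rw [← Finset.sum_sigma (subs μ) (fun κ => aset κ μ)
        (fun p => ((d : ℚ) + p.2.2 - p.2.1) * (ssytCount p.1 d : ℚ))]
      apply Finset.sum_nbij' (i := fun p => ⟨eraseD p.1 p.2, p.2⟩)
        (j := fun p => ⟨insertD p.1 p.2, p.2⟩)
      · rintro ⟨l, y⟩ hp
        rw [Finset.mem_sigma] at hp ⊢
        refine ⟨mem_subs.mpr (le_trans (eraseD_le hp.2) (strips_le hp.1)), ?_⟩
        rw [mem_aset]
        refine ⟨addC_eraseD hp.2, ?_⟩
        rw [insertD_eraseD hp.2]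
        exact hp.1
      · rintro ⟨κ, y⟩ hp
        rw [Finset.mem_sigma] at hp ⊢
        have h2 := mem_aset.mp hp.2
        exact ⟨h2.2, rcells_insertD h2.1⟩
      · rintro ⟨l, y⟩ hp
        rw [Finset.mem_sigma] at hp
        have h1 : insertD (eraseD l y) y = l := insertD_eraseD hp.2
        simp only [h1]
      · rintro ⟨κ, y⟩ hp
        rw [Finset.mem_sigma] at hp
        have h1 : eraseD (insertD κ y) y = κ := eraseD_insertD (mem_aset.mp hp.2).1
        simp only [h1]
      · rintro ⟨l, y⟩ hp
        rfl
    have hS2b : ∀ κ ∈ subs μ,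
        ∑ y ∈ aset κ μ, (((d : ℚ) + y.2 - y.1) * (ssytCount κ d : ℚ))
          = (∑ i ∈ Finset.range N, (if AG κ.rowLen μ.rowLen i then ((d : ℚ) + κ.rowLen i - i) else 0))
              * (ssytCount κ d : ℚ) := by
      intro κ _
      rw [← Finset.sum_mul]
      congr 1
      apply aset_sum
      intro y hy
      exact hbound y (mem_of_aset hy)
    -- S1 : extend the strip sum to all subdiagrams
    have hS1 : ∑ l ∈ strips μ, (∑ i ∈ Finset.range N, ((μ.rowLen i : ℚ) - l.rowLen i)) * (ssytCount l d : ℚ)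
        = ∑ κ ∈ subs μ, (if StripC κ.rowLen μ.rowLen then
            ∑ i ∈ Finset.range N, ((μ.rowLen i : ℚ) - κ.rowLen i) else 0) * (ssytCount κ d : ℚ) := by
      rw [strips, Finset.sum_filter]
      apply Finset.sum_congr rfl
      intro κ hκ
      by_cases h : ∀ t, μ.rowLen (t + 1) ≤ κ.rowLen t
      · rw [if_pos h, if_pos (show StripC κ.rowLen μ.rowLen from
          ⟨fun t => rowLen_le_of_le (mem_subs.mp hκ) t, h⟩)]
      · rw [if_neg h, if_neg (fun hs => h (show StripC κ.rowLen μ.rowLen from hs).2), zero_mul]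
    -- RHS transformation
    have hRHS : ∑ x ∈ rcells μ, ((((d : ℚ) + 1) + x.2 - x.1) * (ssytCount (eraseD μ x) (d + 1) : ℚ))
        = ∑ κ ∈ subs μ, (∑ i ∈ Finset.range N, (if RG κ.rowLen μ.rowLen i then ((d : ℚ) + μ.rowLen i - i) else 0))
            * (ssytCount κ d : ℚ) := by
      have h1 : ∀ x ∈ rcells μ, (((d : ℚ) + 1) + x.2 - x.1) * (ssytCount (eraseD μ x) (d + 1) : ℚ)
          = ∑ κ ∈ strips (eraseD μ x), ((((d : ℚ) + 1) + x.2 - x.1) * (ssytCount κ d : ℚ)) := by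
        intro x hx
        rw [ssytCount_branch (eraseD μ x) d]
        push_cast
        rw [Finset.mul_sum]
      rw [Finset.sum_congr rfl h1]
      rw [← Finset.sum_sigma (rcells μ) (fun x => strips (eraseD μ x))
        (fun p => (((d : ℚ) + 1) + p.1.2 - p.1.1) * (ssytCount p.2 d : ℚ))]
      have h2 : ∑ κ ∈ subs μ, (∑ i ∈ Finset.range N, (if RG κ.rowLen μ.rowLen i then ((d : ℚ) + μ.rowLen i - i) else 0))
            * (ssytCount κ d : ℚ)
          = ∑ κ ∈ subs μ, ∑ x ∈ rset κ μ, ((((d : ℚ) + 1) + x.2 - x.1) * (ssytCount κ d : ℚ)) := by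
        apply Finset.sum_congr rfl
        intro κ _
        rw [← Finset.sum_mul]
        congr 1
        rw [← rset_sum κ μ N (fun x hx => hbound x (mem_of_rset hx)) (d : ℚ)]
      rw [h2]
      rw [← Finset.sum_sigma (subs μ) (fun κ => rset κ μ)
        (fun p => (((d : ℚ) + 1) + p.2.2 - p.2.1) * (ssytCount p.1 d : ℚ))]
      apply Finset.sum_nbij' (i := fun p => ⟨p.2, p.1⟩) (j := fun p => ⟨p.2, p.1⟩)
      · rintro ⟨x, κ⟩ hp
        rw [Finset.mem_sigma] at hp ⊢
        refine ⟨mem_subs.mpr (le_trans (strips_le hp.2) (eraseD_le hp.1)), ?_⟩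
        rw [mem_rset]
        exact ⟨hp.1, hp.2⟩
      · rintro ⟨κ, x⟩ hp
        rw [Finset.mem_sigma] at hp ⊢
        have h3 := mem_rset.mp hp.2
        exact ⟨h3.1, h3.2⟩
      · rintro ⟨x, κ⟩ _
        rfl
      · rintro ⟨κ, x⟩ _
        rfl
      · rintro ⟨x, κ⟩ _
        rfl
    -- assemble
    have hbranch : (μ.card : ℚ) * (ssytCount μ (d + 1) : ℚ)
        = ∑ l ∈ strips μ, ((μ.card : ℚ) * (ssytCount l d : ℚ)) := by
      rw [ssytCount_branch μ d]
      push_cast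
      rw [Finset.mul_sum]
    have hmain : (μ.card : ℚ) * (ssytCount μ (d + 1) : ℚ)
        = ∑ x ∈ rcells μ, ((((d : ℚ) + 1) + x.2 - x.1) * (ssytCount (eraseD μ x) (d + 1) : ℚ)) := by
      rw [hbranch, Finset.sum_congr rfl step2, Finset.sum_add_distrib, hS1, hS2,
        Finset.sum_congr rfl hS2b, hRHS]
      rw [← Finset.sum_add_distrib]
      apply Finset.sum_congr rfl
      intro κ hκ
      rw [← add_mul]
      congr 1
      exact star μ.rowLen κ.rowLen (fun t => μ.rowLen_anti t (t + 1) (by omega))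
        (fun t => κ.rowLen_anti t (t + 1) (by omega)) N (by omega) hfN (d : ℚ)
    rw [hmain]
    apply Finset.sum_congr rfl
    intro x hx
    push_cast
    ring


/-! ### Counting standard tableaux via chains -/

def CT (μ : YoungDiagram) (n : ℕ) :=
  {T : Fin (n + 1) → YoungDiagram //
    T 0 = ⊥ ∧ T (Fin.last n) = μ ∧
    ∀ i : Fin n, T i.castSucc ≤ T i.succ ∧
      (T i.succ).card = (T i.castSucc).card + 1}

lemma sytCount_eq_CT (μ : YoungDiagram) : sytCount μ = Nat.card (CT μ μ.card) := rfl

lemma sytCount_eq_CT' (μ : YoungDiagram) {k : ℕ} (h : μ.card = k) :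
    sytCount μ = Nat.card (CT μ k) := by subst h; rfl

lemma CT_le {μ : YoungDiagram} {n : ℕ} (T : CT μ n) (k : Fin (n + 1)) : T.1 k ≤ μ := by
  have hmono : Monotone T.1 := Fin.monotone_iff_le_succ.mpr (fun i => (T.2.2.2 i).1)
  calc T.1 k ≤ T.1 (Fin.last n) := hmono (Fin.le_last k)
  _ = μ := T.2.2.1

instance ctFinite (μ : YoungDiagram) (n : ℕ) : Finite (CT μ n) := by
  apply Finite.of_injective (β := Fin (n + 1) → {ν : YoungDiagram | ν ≤ μ})
    (fun T => fun k => ⟨T.1 k, CT_le T k⟩)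
  intro T T' h
  apply Subtype.ext
  funext k
  exact congrArg Subtype.val (congrFun h k)

lemma card_bot : (⊥ : YoungDiagram).card = 0 := by
  show (⊥ : YoungDiagram).cells.card = 0
  rw [YoungDiagram.cells_bot]
  rfl

lemma card_pos_of_ne_bot {μ : YoungDiagram} (h : μ ≠ ⊥) : 0 < μ.card := by
  rcases Nat.eq_zero_or_pos μ.card with h0 | h0
  · exact absurd (bot_of_card_zero h0) h
  · exact h0

lemma CT_bot_nonempty : Nonempty (CT ⊥ 0) := by
  refine ⟨⟨fun _ => ⊥, rfl, rfl, fun i => i.elim0⟩⟩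

lemma CT_bot_subsingleton (n : ℕ) : Subsingleton (CT ⊥ n) := by
  constructor
  intro T T'
  apply Subtype.ext
  funext k
  have h1 : T.1 k ≤ ⊥ := CT_le T k
  have h2 : T'.1 k ≤ ⊥ := CT_le T' k
  rw [le_bot_iff] at h1 h2
  rw [h1, h2]

lemma sytCount_bot : sytCount ⊥ = 1 := by
  rw [sytCount_eq_CT' ⊥ card_bot]
  haveI := CT_bot_subsingleton 0
  haveI := CT_bot_nonempty
  exact Nat.card_unique

/-- Extend a chain for `eraseD ν x` by one step to a chain for `ν`. -/
def CT_snoc {ν : YoungDiagram} {x : ℕ × ℕ} (hx : x ∈ rcells ν) {m : ℕ}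
    (g : CT (eraseD ν x) m) : CT ν (m + 1) := by
  refine ⟨Fin.snoc g.1 ν, ?_, ?_, ?_⟩
  · have h0 : (0 : Fin (m + 2)) = (0 : Fin (m + 1)).castSucc := by
      rw [Fin.castSucc_zero']
    rw [h0, Fin.snoc_castSucc]
    exact g.2.1
  · rw [Fin.snoc_last]
  · intro i
    refine Fin.lastCases ?_ ?_ i
    · rw [Fin.succ_last, Fin.snoc_last, Fin.snoc_castSucc]
      constructor
      · rw [g.2.2.1]
        exact eraseD_le hx
      · rw [g.2.2.1]
        exact (card_eraseD hx).symm
    · intro j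
      rw [Fin.snoc_castSucc, Fin.succ_castSucc, Fin.snoc_castSucc]
      exact g.2.2.2 j

lemma rcells_nonempty {ν : YoungDiagram} (h : ν ≠ ⊥) : (rcells ν).Nonempty := by
  have hne : ν.cells.Nonempty := by
    rw [Finset.nonempty_iff_ne_empty]
    intro hc
    exact h (by apply YoungDiagram.ext; rw [YoungDiagram.cells_bot]; exact hc)
  obtain ⟨b, hb, hmax⟩ := Finset.exists_max_image ν.cells (fun c => c.1 + c.2) hne
  refine ⟨b, ?_⟩
  rw [mem_rcells]
  refine ⟨(YoungDiagram.mem_cells b).mp hb, ?_, ?_⟩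
  · intro hc
    have := hmax _ ((YoungDiagram.mem_cells _).mpr hc)
    simp only at this
    omega
  · intro hc
    have := hmax _ ((YoungDiagram.mem_cells _).mpr hc)
    simp only at this
    omega

lemma CT_nonempty : ∀ (n : ℕ) (ν : YoungDiagram), ν.card = n → Nonempty (CT ν n) := by
  intro n
  induction n with
  | zero =>
    intro ν hν
    have := bot_of_card_zero hν
    subst this
    exact CT_bot_nonempty
  | succ m IHm =>
    intro ν hν
    have hne : ν ≠ ⊥ := by
      intro hc
      subst hc
      rw [card_bot] at hν
      omega
    obtain ⟨x, hx⟩ := rcells_nonempty hne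
    have hcard : (eraseD ν x).card = m := by
      have := card_eraseD hx
      omega
    obtain ⟨g⟩ := IHm (eraseD ν x) hcard
    exact ⟨CT_snoc hx g⟩

lemma sytCount_pos (ν : YoungDiagram) : 0 < sytCount ν := by
  rw [sytCount_eq_CT]
  haveI := CT_nonempty ν.card ν rfl
  exact Nat.card_pos

lemma exists_rcell_eq {ν μ : YoungDiagram} (hle : ν ≤ μ) (hc : ν.card + 1 = μ.card) :
    ∃ x, x ∈ rcells μ ∧ eraseD μ x = ν := by
  have hsub : ν.cells ⊆ μ.cells := YoungDiagram.cells_subset_iff.mpr hle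
  have hdiff : (μ.cells \ ν.cells).card = 1 := by
    rw [Finset.card_sdiff_of_subset hsub]
    show μ.card - ν.card = 1
    omega
  obtain ⟨x, hx⟩ := Finset.card_eq_one.mp hdiff
  have hxμ : x ∈ μ.cells := by
    have : x ∈ μ.cells \ ν.cells := hx ▸ Finset.mem_singleton_self x
    exact (Finset.mem_sdiff.mp this).1
  have hxν : x ∉ ν.cells := by
    have : x ∈ μ.cells \ ν.cells := hx ▸ Finset.mem_singleton_self x
    exact (Finset.mem_sdiff.mp this).2
  have hcells : ν.cells = μ.cells.erase x := by
    apply Finset.ext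
    intro a
    rw [Finset.mem_erase]
    constructor
    · intro ha
      exact ⟨fun he => hxν (he ▸ ha), hsub ha⟩
    · rintro ⟨hne, ha⟩
      by_contra hc'
      have : a ∈ μ.cells \ ν.cells := Finset.mem_sdiff.mpr ⟨ha, hc'⟩
      rw [hx, Finset.mem_singleton] at this
      exact hne this
  have hxr : x ∈ rcells μ := by
    rw [mem_rcells]
    refine ⟨(YoungDiagram.mem_cells x).mp hxμ, ?_, ?_⟩
    · intro hcm
      have h1 : ((x.1 + 1, x.2) : ℕ × ℕ) ∈ ν.cells := by
        rw [hcells, Finset.mem_erase]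
        refine ⟨?_, (YoungDiagram.mem_cells _).mpr hcm⟩
        intro he
        have h3 : x.1 + 1 = x.1 := congrArg Prod.fst he
        omega
      have h2 : x ∈ ν := by
        have h4 := ν.up_left_mem (Nat.le_succ x.1) (le_refl x.2)
          ((YoungDiagram.mem_cells _).mp h1)
        rwa [Prod.mk.eta] at h4
      exact hxν ((YoungDiagram.mem_cells x).mpr h2)
    · intro hcm
      have h1 : ((x.1, x.2 + 1) : ℕ × ℕ) ∈ ν.cells := by
        rw [hcells, Finset.mem_erase]
        refine ⟨?_, (YoungDiagram.mem_cells _).mpr hcm⟩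
        intro he
        have h3 : x.2 + 1 = x.2 := congrArg Prod.snd he
        omega
      have h2 : x ∈ ν := by
        have h4 := ν.up_left_mem (le_refl x.1) (Nat.le_succ x.2)
          ((YoungDiagram.mem_cells _).mp h1)
        rwa [Prod.mk.eta] at h4
      exact hxν ((YoungDiagram.mem_cells x).mpr h2)
  refine ⟨x, hxr, ?_⟩
  apply YoungDiagram.ext
  rw [cells_eraseD hxr, ← hcells]

lemma rcell_inj {μ : YoungDiagram} {x x' : ℕ × ℕ} (hx : x ∈ rcells μ) (hx' : x' ∈ rcells μ)
    (h : eraseD μ x = eraseD μ x') : x = x' := by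
  have h1 : μ.cells.erase x = μ.cells.erase x' := by
    rw [← cells_eraseD hx, ← cells_eraseD hx', h]
  by_contra hne
  have hxμ : x ∈ μ.cells := (YoungDiagram.mem_cells x).mpr (mem_rcells.mp hx).1
  have : x ∈ μ.cells.erase x' := Finset.mem_erase.mpr ⟨hne, hxμ⟩
  rw [← h1] at this
  exact (Finset.notMem_erase x _) this

lemma CT_prevle {μ : YoungDiagram} {m : ℕ} (T : CT μ (m + 1)) :
    T.1 (Fin.last m).castSucc ≤ μ := by
  have h := (T.2.2.2 (Fin.last m)).1
  rwa [Fin.succ_last, T.2.2.1] at h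

lemma CT_prevcard {μ : YoungDiagram} {m : ℕ} (T : CT μ (m + 1)) :
    (T.1 (Fin.last m).castSucc).card + 1 = μ.card := by
  have h := (T.2.2.2 (Fin.last m)).2
  rw [Fin.succ_last, T.2.2.1] at h
  omega

noncomputable def CT_split {μ : YoungDiagram} {m : ℕ} (T : CT μ (m + 1)) :
    Σ x : {x // x ∈ rcells μ}, CT (eraseD μ x.1) m :=
  ⟨⟨Classical.choose (exists_rcell_eq (CT_prevle T) (CT_prevcard T)),
    (Classical.choose_spec (exists_rcell_eq (CT_prevle T) (CT_prevcard T))).1⟩,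
   ⟨fun k => T.1 k.castSucc, by
      exact T.2.1, by
      exact (Classical.choose_spec (exists_rcell_eq (CT_prevle T) (CT_prevcard T))).2.symm, by
      intro j
      have h := T.2.2.2 j.castSucc
      rwa [Fin.succ_castSucc] at h⟩⟩

lemma CT_sigma_ext {μ : YoungDiagram} {m : ℕ}
    (a b : Σ x : {x // x ∈ rcells μ}, CT (eraseD μ x.1) m)
    (h1 : a.1.1 = b.1.1) (h2 : ∀ k, a.2.1 k = b.2.1 k) : a = b := by
  obtain ⟨⟨xa, hxa⟩, ga⟩ := a
  obtain ⟨⟨xb, hxb⟩, gb⟩ := b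
  simp only at h1 h2
  subst h1
  have : ga = gb := Subtype.ext (funext h2)
  subst this
  rfl

lemma sytCount_rec (μ : YoungDiagram) {m : ℕ} (hm : μ.card = m + 1) :
    sytCount μ = ∑ x ∈ rcells μ, sytCount (eraseD μ x) := by
  classical
  rw [sytCount_eq_CT' μ hm]
  have e : CT μ (m + 1) ≃ Σ x : {x // x ∈ rcells μ}, CT (eraseD μ x.1) m :=
    { toFun := CT_split
      invFun := fun p => CT_snoc p.1.2 p.2
      left_inv := by
        intro T
        apply Subtype.ext
        funext k
        show Fin.snoc (α := fun _ => YoungDiagram) (fun k => T.1 k.castSucc) μ k = T.1 k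
        refine Fin.lastCases ?_ ?_ k
        · rw [Fin.snoc_last, T.2.2.1]
        · intro j
          rw [Fin.snoc_castSucc]
      right_inv := by
        rintro ⟨⟨x, hx⟩, g⟩
        apply CT_sigma_ext
        · have hs : eraseD μ (CT_split (CT_snoc hx g)).1.1
              = (CT_snoc hx g).1 (Fin.last m).castSucc :=
            (Classical.choose_spec (exists_rcell_eq (CT_prevle (CT_snoc hx g))
              (CT_prevcard (CT_snoc hx g)))).2
          have hv : (CT_snoc hx g).1 (Fin.last m).castSucc = eraseD μ x := by
            show Fin.snoc (α := fun _ => YoungDiagram) g.1 μ (Fin.last m).castSucc = _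
            rw [Fin.snoc_castSucc]
            exact g.2.2.1
          exact rcell_inj (CT_split (CT_snoc hx g)).1.2 hx (by rw [hs, hv])
        · intro k
          show Fin.snoc (α := fun _ => YoungDiagram) g.1 μ k.castSucc = g.1 k
          rw [Fin.snoc_castSucc] }
  rw [Nat.card_congr e]
  haveI : ∀ x : {x // x ∈ rcells μ}, Fintype (CT (eraseD μ x.1) m) :=
    fun x => Fintype.ofFinite _
  rw [Nat.card_eq_fintype_card, Fintype.card_sigma,
    ← Finset.sum_coe_sort (rcells μ) (fun x => sytCount (eraseD μ x))]
  apply Finset.sum_congr rfl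
  intro x _
  have hc : (eraseD μ x.1).card = m := by
    have h1 := card_eraseD x.2
    omega
  rw [sytCount_eq_CT' (eraseD μ x.1) hc]
  exact (Nat.card_eq_fintype_card).symm

/-! ### The master counting identity -/

theorem master : ∀ (n : ℕ) (μ : YoungDiagram), μ.card = n → ∀ d : ℕ,
    (Nat.factorial n : ℚ) * (ssytCount μ d : ℚ)
      = (∏ c ∈ μ.cells, ((d : ℚ) + c.2 - c.1)) * (sytCount μ : ℚ) := by
  intro n
  induction n with
  | zero =>
    intro μ hμ d
    have hbot := bot_of_card_zero hμ
    subst hbot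
    rw [ssytCount_bot, sytCount_bot, YoungDiagram.cells_bot]
    simp [Nat.factorial]
  | succ m IHm =>
    intro μ hμ d
    have hrec := sytCount_rec μ hμ
    have hB := identB d μ
    rw [hμ] at hB
    have key : (Nat.factorial (m + 1) : ℚ) * (ssytCount μ d : ℚ)
        = (Nat.factorial m : ℚ) * (((m : ℚ) + 1) * (ssytCount μ d : ℚ)) := by
      rw [Nat.factorial_succ]
      push_cast
      ring
    rw [key]
    have hB' : ((m : ℚ) + 1) * (ssytCount μ d : ℚ)
        = ∑ x ∈ rcells μ, (((d : ℚ) + x.2 - x.1) * (ssytCount (eraseD μ x) d : ℚ)) := by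
      rw [← hB]
      push_cast
      ring
    rw [hB', Finset.mul_sum]
    have hterm : ∀ x ∈ rcells μ,
        (Nat.factorial m : ℚ) * (((d : ℚ) + x.2 - x.1) * (ssytCount (eraseD μ x) d : ℚ))
          = (∏ c ∈ μ.cells, ((d : ℚ) + c.2 - c.1)) * (sytCount (eraseD μ x) : ℚ) := by
      intro x hx
      have hcard : (eraseD μ x).card = m := by
        have := card_eraseD hx
        omega
      have hIH := IHm (eraseD μ x) hcard d
      have hF : (∏ c ∈ μ.cells, ((d : ℚ) + c.2 - c.1))
          = ((d : ℚ) + x.2 - x.1) * ∏ c ∈ (eraseD μ x).cells, ((d : ℚ) + c.2 - c.1) := by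
        rw [cells_eraseD hx]
        exact (Finset.mul_prod_erase μ.cells _
          ((YoungDiagram.mem_cells x).mpr (mem_rcells.mp hx).1)).symm
      rw [hF]
      calc (Nat.factorial m : ℚ) * (((d : ℚ) + x.2 - x.1) * (ssytCount (eraseD μ x) d : ℚ))
          = ((d : ℚ) + x.2 - x.1) * ((Nat.factorial m : ℚ) * (ssytCount (eraseD μ x) d : ℚ)) := by ring
        _ = ((d : ℚ) + x.2 - x.1) * ((∏ c ∈ (eraseD μ x).cells, ((d : ℚ) + c.2 - c.1)) * (sytCount (eraseD μ x) : ℚ)) := by rw [hIH]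
        _ = _ := by ring
    rw [Finset.sum_congr rfl hterm, ← Finset.mul_sum, hrec]
    push_cast
    ring

end CID

theorem content_into_dims' (d p : ℕ) (hd : 1 ≤ d) (hp : 1 ≤ p)
    (μ lam : YoungDiagram) (x : ℕ × ℕ)
    (hμcard : μ.card = p) (hsub : lam ≤ μ) (hstep : lam.card + 1 = μ.card)
    (hxin : x ∈ μ) (hxout : x ∉ lam) (hrows : μ.colLen 0 ≤ d) :
    (d : ℚ) + ((x.2 : ℚ) - (x.1 : ℚ)) =
      (p : ℚ) * ((sytCount lam : ℚ) / (sytCount μ : ℚ)) *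
        ((ssytCount μ d : ℚ) / (ssytCount lam d : ℚ)) := by
  classical
  obtain ⟨x', hx', he⟩ := CID.exists_rcell_eq hsub hstep
  have hxx : x = x' := by
    by_contra hne
    apply hxout
    rw [← YoungDiagram.mem_cells] at hxin ⊢
    rw [← he, CID.cells_eraseD hx']
    exact Finset.mem_erase.mpr ⟨hne, hxin⟩
  subst hxx
  have hlamcard : lam.card = p - 1 := by omega
  have hM1 := CID.master p μ hμcard d
  have hM2 := CID.master (p - 1) lam hlamcard d
  set Fl : ℚ := ∏ c ∈ lam.cells, ((d : ℚ) + c.2 - c.1) with hFl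
  have hF : (∏ c ∈ μ.cells, ((d : ℚ) + c.2 - c.1)) = ((d : ℚ) + x.2 - x.1) * Fl := by
    rw [hFl, ← he, CID.cells_eraseD hx']
    exact (Finset.mul_prod_erase μ.cells _ ((YoungDiagram.mem_cells x).mpr hxin)).symm
  rw [hF] at hM1
  have hcol : lam.colLen 0 ≤ d := le_trans (CID.colLen_le_of_le hsub) hrows
  have ha : (sytCount lam : ℚ) ≠ 0 := by
    exact_mod_cast (CID.sytCount_pos lam).ne'
  have hb : (sytCount μ : ℚ) ≠ 0 := by
    exact_mod_cast (CID.sytCount_pos μ).ne'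
  have hFl0 : Fl ≠ 0 := by
    rw [hFl]
    apply ne_of_gt
    apply Finset.prod_pos
    intro c hc
    have h1 : c.1 < lam.colLen 0 := CID.lt_colLen_of_mem ((YoungDiagram.mem_cells c).mp hc)
    have h2 : (c.1 : ℚ) < (d : ℚ) := by
      have : c.1 < d := by omega
      exact_mod_cast this
    have h3 : (0 : ℚ) ≤ (c.2 : ℚ) := by positivity
    linarith
  have hpf : ((p.factorial : ℕ) : ℚ) ≠ 0 := by
    exact_mod_cast (Nat.factorial_pos p).ne'
  have hpf1 : (((p - 1).factorial : ℕ) : ℚ) ≠ 0 := by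
    exact_mod_cast (Nat.factorial_pos (p - 1)).ne'
  have hfac : ((p.factorial : ℕ) : ℚ) = (p : ℚ) * (((p - 1).factorial : ℕ) : ℚ) := by
    have h : p - 1 + 1 = p := by omega
    calc ((p.factorial : ℕ) : ℚ) = (((p - 1 + 1).factorial : ℕ) : ℚ) := by rw [h]
    _ = (((p - 1 + 1) * (p - 1).factorial : ℕ) : ℚ) := by rw [Nat.factorial_succ]
    _ = (p : ℚ) * (((p - 1).factorial : ℕ) : ℚ) := by push_cast [h]; ring
  have hu : (ssytCount μ d : ℚ)
      = ((d : ℚ) + x.2 - x.1) * Fl * (sytCount μ : ℚ) / ((p.factorial : ℕ) : ℚ) := by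
    rw [← hM1]
    field_simp
  have hv : (ssytCount lam d : ℚ)
      = Fl * (sytCount lam : ℚ) / (((p - 1).factorial : ℕ) : ℚ) := by
    rw [← hM2]
    field_simp
  rw [hu, hv, hfac]
  field_simp
  ring



/-- For `μ ⊢ p` with at most `d` rows and `λ = μ \ x` obtained by removing a cell `x`:
`d + cont(x) = p · (d_λ / d_μ) · (m_μ / m_λ)`, where `d_ν` counts standard Young
tableaux of shape `ν` and `m_ν` counts semistandard Young tableaux of shape `ν` with
entries in `d` symbols. -/
theorem content_into_dims (d p : ℕ) (hd : 1 ≤ d) (hp : 1 ≤ p)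
    (μ lam : YoungDiagram) (x : ℕ × ℕ)
    (hμcard : μ.card = p) (hsub : lam ≤ μ) (hstep : lam.card + 1 = μ.card)
    (hxin : x ∈ μ) (hxout : x ∉ lam) (hrows : μ.colLen 0 ≤ d) :
    (d : ℚ) + contQ x =
      (p : ℚ) * ((sytCount lam : ℚ) / (sytCount μ : ℚ)) *
        ((ssytCount μ d : ℚ) / (ssytCount lam d : ℚ)) := by
  have h := content_into_dims' d p hd hp μ lam x hμcard hsub hstep hxin hxout hrows
  simpa [contQ] using h
end

section
/- Let λ be a Young diagram and let c be any removable cell of λ. Then ∑_{m ∈ AC(λ)} cont(m) · [∏_{w ∈ RC(λ)\{c}} (cont(m) - cont(w))] / [∏_{v ∈ AC(λ)\{m}} (cont(m) - cont(v))] = 1. -/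
/-! ### Auxiliary results: Lagrange interpolation -/

open Polynomial

lemma basisDivisor_leadingCoeff (x y : ℚ) :
    (Lagrange.basisDivisor x y).leadingCoeff = (x - y)⁻¹ := by
  rw [Lagrange.basisDivisor, leadingCoeff_mul, leadingCoeff_C,
    (monic_X_sub_C y).leadingCoeff, mul_one]

lemma basis_coeff {ι : Type*} [DecidableEq ι] {s : Finset ι} {v : ι → ℚ}
    (hvs : Set.InjOn v s) {i : ι} (hi : i ∈ s) :
    (Lagrange.basis s v i).coeff (s.card - 1) =
      (∏ j ∈ s.erase i, (v i - v j))⁻¹ := by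
  have hnd : (Lagrange.basis s v i).natDegree = s.card - 1 :=
    Lagrange.natDegree_basis hvs hi
  rw [← hnd, ← leadingCoeff, Lagrange.basis, leadingCoeff_prod, ← Finset.prod_inv_distrib]
  exact Finset.prod_congr rfl fun j _ => basisDivisor_leadingCoeff _ _

/-- Lagrange-interpolation identity: for a monic polynomial `P` of degree `|s| - 1`
and nodes `v i`, `i ∈ s`, with pairwise distinct values, the sum of
`P(v i) / ∏_{j ≠ i} (v i - v j)` equals `1` (the leading coefficient). -/
lemma lagrange_key {ι : Type*} [DecidableEq ι] {s : Finset ι} {v : ι → ℚ}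
    (hvs : Set.InjOn v s) {P : Polynomial ℚ} (hm : P.Monic)
    (hd : P.natDegree + 1 = s.card) :
    ∑ i ∈ s, P.eval (v i) / ∏ j ∈ s.erase i, (v i - v j) = 1 := by
  have hdeg : P.degree < s.card :=
    (Polynomial.natDegree_lt_iff_degree_lt hm.ne_zero).1 (by omega)
  have hP := Lagrange.eq_interpolate hvs hdeg
  have h2 := congrArg (fun q => Polynomial.coeff q P.natDegree) hP
  simp only [Lagrange.interpolate_apply, Polynomial.finset_sum_coeff,
    Polynomial.coeff_C_mul] at h2
  rw [hm.coeff_natDegree] at h2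
  rw [h2]
  refine Finset.sum_congr rfl fun i hi => ?_
  have hnd : P.natDegree = s.card - 1 := by omega
  rw [hnd, basis_coeff hvs hi, div_eq_mul_inv]

/-! ### Auxiliary results: addable and removable cells -/

lemma rowLen_pos_iff {lam : YoungDiagram} {i : ℕ} :
    0 < lam.rowLen i ↔ i < lam.colLen 0 := by
  rw [← YoungDiagram.mem_iff_lt_rowLen, YoungDiagram.mem_iff_lt_colLen]

lemma isAddable_iff (lam : YoungDiagram) (i j : ℕ) :
    IsAddableCell lam (i, j) ↔
      j = lam.rowLen i ∧ (i = 0 ∨ lam.rowLen i < lam.rowLen (i - 1)) := by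
  constructor
  · rintro ⟨hnm, ν, hν⟩
    have hmemν : (i, j) ∈ ν.cells := by rw [hν]; exact Finset.mem_insert_self _ _
    have hlow := ν.isLowerSet
    have hj : lam.rowLen i ≤ j := by
      by_contra h
      exact hnm (YoungDiagram.mem_iff_lt_rowLen.2 (by omega))
    have hsub : ∀ x : ℕ × ℕ, x ≤ (i, j) → x ≠ (i, j) → x ∈ lam := by
      intro x hle hne
      have hx : x ∈ ν.cells := hlow hle hmemν
      rw [hν, Finset.mem_insert] at hx
      rcases hx with h | h
      · exact absurd h hne
      · exact h
    have hjeq : j = lam.rowLen i := by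
      by_contra h
      have hlt : lam.rowLen i < j := by omega
      have : (i, lam.rowLen i) ∈ lam :=
        hsub (i, lam.rowLen i) (Prod.mk_le_mk.2 ⟨le_rfl, by omega⟩)
          (by simp only [ne_eq, Prod.mk.injEq, not_and]; omega)
      rw [YoungDiagram.mem_iff_lt_rowLen] at this; omega
    refine ⟨hjeq, ?_⟩
    rcases Nat.eq_zero_or_pos i with h0 | hpos
    · exact Or.inl h0
    · right
      have : (i - 1, j) ∈ lam :=
        hsub (i - 1, j) (Prod.mk_le_mk.2 ⟨by omega, le_rfl⟩)
          (by simp only [ne_eq, Prod.mk.injEq, not_and]; omega)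
      rw [YoungDiagram.mem_iff_lt_rowLen] at this; omega
  · rintro ⟨hj, hcond⟩
    subst hj
    refine ⟨by simp [YoungDiagram.mem_iff_lt_rowLen], ?_⟩
    refine ⟨⟨insert (i, lam.rowLen i) lam.cells, ?_⟩, rfl⟩
    intro x y hle hx
    simp only [Finset.coe_insert, Set.mem_insert_iff] at hx ⊢
    rcases hx with hx | hx
    · subst hx
      by_cases hxy : y = (i, lam.rowLen i)
      · exact Or.inl hxy
      · right
        obtain ⟨y1, y2⟩ := y
        obtain ⟨h1, h2⟩ := hle
        simp only at h1 h2
        simp only [Prod.mk.injEq, not_and] at hxy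
        have hmem : y2 < lam.rowLen y1 := by
          rcases Nat.lt_or_ge y1 i with hlt | hge
          · rcases hcond with h0 | h0
            · omega
            · have := lam.rowLen_anti y1 (i - 1) (by omega)
              omega
          · have hy1 : y1 = i := by omega
            subst hy1
            omega
        exact Finset.mem_coe.2 ((YoungDiagram.mem_cells _).2
          (YoungDiagram.mem_iff_lt_rowLen.2 hmem))
    · exact Or.inr (lam.isLowerSet hle hx)

lemma isRemovable_iff (lam : YoungDiagram) (i j : ℕ) :
    IsRemovableCell lam (i, j) ↔
      lam.rowLen (i + 1) < lam.rowLen i ∧ j = lam.rowLen i - 1 := by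
  constructor
  · rintro ⟨hm, ν, hν⟩
    rw [YoungDiagram.mem_iff_lt_rowLen] at hm
    have hlow := ν.isLowerSet
    have key : ∀ x : ℕ × ℕ, (i, j) ≤ x → x ∈ lam → x = (i, j) := by
      intro x hle hx
      by_contra hne
      have hxν : x ∈ ν.cells := by
        rw [hν, Finset.mem_erase]
        exact ⟨hne, (YoungDiagram.mem_cells _).2 hx⟩
      have : (i, j) ∈ ν.cells := hlow hle hxν
      rw [hν, Finset.mem_erase] at this
      exact this.1 rfl
    have hjeq : j = lam.rowLen i - 1 := by
      by_contra h
      have : (i, j + 1) ∈ lam := YoungDiagram.mem_iff_lt_rowLen.2 (by omega)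
      have := key (i, j + 1) (Prod.mk_le_mk.2 ⟨le_rfl, by omega⟩) this
      simp only [Prod.mk.injEq] at this; omega
    refine ⟨?_, hjeq⟩
    by_contra h
    have : (i + 1, j) ∈ lam := YoungDiagram.mem_iff_lt_rowLen.2 (by omega)
    have := key (i + 1, j) (Prod.mk_le_mk.2 ⟨by omega, le_rfl⟩) this
    simp only [Prod.mk.injEq] at this; omega
  · rintro ⟨hlt, hj⟩
    subst hj
    have hpos : 0 < lam.rowLen i := by omega
    refine ⟨YoungDiagram.mem_iff_lt_rowLen.2 (by omega), ?_⟩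
    refine ⟨⟨lam.cells.erase (i, lam.rowLen i - 1), ?_⟩, rfl⟩
    intro x y hle hx
    simp only [Finset.coe_erase, Set.mem_diff, Set.mem_singleton_iff] at hx ⊢
    obtain ⟨hxl, hxne⟩ := hx
    refine ⟨lam.isLowerSet hle hxl, ?_⟩
    intro hy
    subst hy
    obtain ⟨x1, x2⟩ := x
    obtain ⟨h1, h2⟩ := hle
    simp only at h1 h2
    have hxmem : x2 < lam.rowLen x1 :=
      YoungDiagram.mem_iff_lt_rowLen.1 ((YoungDiagram.mem_cells _).1 (Finset.mem_coe.1 hxl))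
    rcases Nat.lt_or_ge i x1 with hgt | hle'
    · have := lam.rowLen_anti (i + 1) x1 (by omega); omega
    · have hx1 : x1 = i := by omega
      subst hx1
      have hx2 : x2 = lam.rowLen x1 - 1 := by omega
      exact hxne (by rw [hx2])

/-- The rows at which `lam` has an addable cell. -/
noncomputable def Afin (lam : YoungDiagram) : Finset ℕ :=
  (Finset.range (lam.colLen 0 + 1)).filter fun i => i = 0 ∨ lam.rowLen i < lam.rowLen (i - 1)

/-- The rows at which `lam` has a removable cell. -/
noncomputable def Dfin (lam : YoungDiagram) : Finset ℕ :=
  (Finset.range (lam.colLen 0)).filter fun i => lam.rowLen (i + 1) < lam.rowLen i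

/-- The finset of addable cells of `lam`. -/
noncomputable def ACfin (lam : YoungDiagram) : Finset (ℕ × ℕ) :=
  (Afin lam).image fun i => (i, lam.rowLen i)

/-- The finset of removable cells of `lam`. -/
noncomputable def RCfin (lam : YoungDiagram) : Finset (ℕ × ℕ) :=
  (Dfin lam).image fun i => (i, lam.rowLen i - 1)

lemma mem_ACfin {lam : YoungDiagram} {m : ℕ × ℕ} :
    m ∈ ACfin lam ↔ IsAddableCell lam m := by
  obtain ⟨i, j⟩ := m
  rw [isAddable_iff]
  simp only [ACfin, Afin, Finset.mem_image, Finset.mem_filter, Finset.mem_range,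
    Prod.mk.injEq]
  constructor
  · rintro ⟨a, ⟨-, ha⟩, rfl, rfl⟩
    exact ⟨rfl, ha⟩
  · rintro ⟨rfl, hcond⟩
    refine ⟨i, ⟨?_, hcond⟩, rfl, rfl⟩
    by_contra h
    have h1 : lam.rowLen i = 0 := by
      by_contra h'
      have := rowLen_pos_iff.1 (Nat.pos_of_ne_zero h')
      omega
    have h2 : lam.rowLen (i - 1) = 0 := by
      by_contra h'
      have := rowLen_pos_iff.1 (Nat.pos_of_ne_zero h')
      omega
    rcases hcond with h0 | h0 <;> omega

lemma mem_RCfin {lam : YoungDiagram} {m : ℕ × ℕ} :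
    m ∈ RCfin lam ↔ IsRemovableCell lam m := by
  obtain ⟨i, j⟩ := m
  rw [isRemovable_iff]
  simp only [RCfin, Dfin, Finset.mem_image, Finset.mem_filter, Finset.mem_range,
    Prod.mk.injEq]
  constructor
  · rintro ⟨a, ⟨-, ha⟩, rfl, rfl⟩
    exact ⟨ha, rfl⟩
  · rintro ⟨hlt, rfl⟩
    exact ⟨i, ⟨rowLen_pos_iff.1 (by omega), hlt⟩, rfl, rfl⟩

lemma Afin_eq (lam : YoungDiagram) :
    Afin lam = insert 0 ((Dfin lam).image (· + 1)) := by
  ext i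
  simp only [Afin, Dfin, Finset.mem_filter, Finset.mem_range, Finset.mem_insert,
    Finset.mem_image]
  constructor
  · rintro ⟨hi, h0 | h0⟩
    · exact Or.inl h0
    · right
      refine ⟨i - 1, ⟨?_, ?_⟩, ?_⟩
      · exact rowLen_pos_iff.1 (by omega)
      · have hi1 : i - 1 + 1 = i := by
          rcases Nat.eq_zero_or_pos i with h | h
          · subst h; simp at h0
          · omega
        rw [hi1]; exact h0
      · rcases Nat.eq_zero_or_pos i with h | h
        · subst h; simp at h0
        · omega
  · rintro (rfl | ⟨a, ⟨ha, hlt⟩, rfl⟩)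
    · exact ⟨by omega, Or.inl rfl⟩
    · refine ⟨by omega, Or.inr ?_⟩
      simpa using hlt

lemma card_ACfin (lam : YoungDiagram) : (ACfin lam).card = (Dfin lam).card + 1 := by
  have hinj1 : Function.Injective (fun i : ℕ => (i, lam.rowLen i)) := by
    intro a b hab
    exact congrArg Prod.fst hab
  rw [ACfin, Finset.card_image_of_injective _ hinj1, Afin_eq,
    Finset.card_insert_of_notMem (by simp), Finset.card_image_of_injective _
      (fun a b (h : a + 1 = b + 1) => by omega)]

lemma card_RCfin (lam : YoungDiagram) : (RCfin lam).card = (Dfin lam).card := by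
  have hinj : Function.Injective (fun i : ℕ => (i, lam.rowLen i - 1)) := by
    intro a b hab
    exact congrArg Prod.fst hab
  rw [RCfin, Finset.card_image_of_injective _ hinj]

lemma injOn_contQ (lam : YoungDiagram) : Set.InjOn contQ (ACfin lam) := by
  have key : ∀ a b : ℕ, a < b →
      contQ (b, lam.rowLen b) < contQ (a, lam.rowLen a) := by
    intro a b hab
    have h1 : lam.rowLen b ≤ lam.rowLen a := lam.rowLen_anti a b hab.le
    have h1' : (lam.rowLen b : ℚ) ≤ lam.rowLen a := by exact_mod_cast h1
    have h2 : (a : ℚ) < b := by exact_mod_cast hab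
    simp only [contQ]
    linarith
  intro x hx y hy hxy
  simp only [Finset.coe_image, Set.mem_image, Finset.mem_coe, ACfin] at hx hy
  obtain ⟨a, -, rfl⟩ := hx
  obtain ⟨b, -, rfl⟩ := hy
  rcases lt_trichotomy a b with h | h | h
  · exact absurd hxy (by have := key a b h; exact fun e => absurd e.symm (ne_of_lt this))
  · rw [h]
  · exact absurd hxy (ne_of_lt (key b a h))

/-- For any Young diagram `λ` and any removable cell `c` of `λ`:
`∑_{m ∈ AC(λ)} cont(m) · ∏_{w ∈ RC(λ)\{c}} (cont m - cont w) /
  ∏_{v ∈ AC(λ)\{m}} (cont m - cont v) = 1`. -/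
theorem content_ratio_sum_one (lam : YoungDiagram) (c : ℕ × ℕ)
    (hc : IsRemovableCell lam c) :
    ∑ᶠ m ∈ {m | IsAddableCell lam m},
      contQ m *
        ((∏ᶠ w ∈ {w | IsRemovableCell lam w} \ {c}, (contQ m - contQ w)) /
          (∏ᶠ v ∈ {v | IsAddableCell lam v} \ {m}, (contQ m - contQ v))) = 1 := by
  classical
  have hcR : c ∈ RCfin lam := mem_RCfin.2 hc
  set s := ACfin lam with hs
  set t := RCfin lam with ht
  have hset1 : {m | IsAddableCell lam m} = (↑s : Set (ℕ × ℕ)) := by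
    ext m
    rw [Set.mem_setOf_eq, Finset.mem_coe, mem_ACfin]
  have hset2 : {w | IsRemovableCell lam w} \ {c} = (↑(t.erase c) : Set (ℕ × ℕ)) := by
    rw [Finset.coe_erase]
    congr 1
    ext w
    rw [Set.mem_setOf_eq, Finset.mem_coe, mem_RCfin]
  set P : Polynomial ℚ := Polynomial.X * Lagrange.nodal (t.erase c) contQ with hP
  have hmonic : P.Monic := Polynomial.monic_X.mul Lagrange.nodal_monic
  have hdeg : P.natDegree + 1 = s.card := by
    have h1 : (t.erase c).card = t.card - 1 := Finset.card_erase_of_mem hcR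
    have ht1 : 1 ≤ t.card := Finset.card_pos.2 ⟨c, hcR⟩
    have h2 : P.natDegree = 1 + (t.erase c).card := by
      rw [hP, Polynomial.monic_X.natDegree_mul Lagrange.nodal_monic,
        Polynomial.natDegree_X, Lagrange.natDegree_nodal]
    have h3 := card_ACfin lam
    have h4 := card_RCfin lam
    rw [h2, h1]
    rw [← hs] at h3
    rw [← ht] at h4
    omega
  rw [hset1, hset2, finsum_mem_coe_finset]
  have step : ∀ m ∈ s,
      contQ m * ((∏ᶠ w ∈ (↑(t.erase c) : Set (ℕ × ℕ)), (contQ m - contQ w)) /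
          (∏ᶠ v ∈ (↑s : Set (ℕ × ℕ)) \ {m}, (contQ m - contQ v))) =
        P.eval (contQ m) / ∏ v ∈ s.erase m, (contQ m - contQ v) := by
    intro m hm
    rw [finprod_mem_coe_finset, ← Finset.coe_erase, finprod_mem_coe_finset,
      hP, Polynomial.eval_mul, Polynomial.eval_X, Lagrange.eval_nodal,
      mul_div_assoc]
  rw [Finset.sum_congr rfl step]
  exact lagrange_key (injOn_contQ lam) hmonic hdeg
end
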